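/- arXiv:2309.07261 — 5 statements merged into one kernel-verified Lean document; each statement's English description precedes it below -/
import Mathlib

section
/- Let Γ be a real p×r matrix of full column rank r, let Σ_w be a symmetric positive definite r×r real matrix, and let B be a real p×d matrix. Let λ_r(ΓΣ_wΓᵀ) denote the r-th largest eigenvalue of ΓΣ_wΓᵀ (its smallest nonzero eigenvalue). Then for every i ∈ {1,…,p} and j ∈ {1,…,d}, the (i,j) entry of P_Γ B satisfies |(P_Γ B)_{ij}| ≤ (max_{1≤ℓ≤p} (ΓΣ_wΓᵀ)_{ℓℓ})^{1/2} · ((ΓΣ_wΓᵀ)_{ii})^{1/2} · ‖B_j‖₁ / λ_r(ΓΣ_wΓᵀ), where B_j is the j-th column of B and ‖·‖₁ is the vector ℓ1-norm. (Entrywise bound from the proof of Proposition 2.1.) -/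
open Matrix MeasureTheory
open scoped BigOperators ENNReal

noncomputable def opNorm {m n : ℕ} (M : Matrix (Fin m) (Fin n) ℝ) : ℝ :=
  ‖LinearMap.toContinuousLinearMap (Matrix.toEuclideanLin M)‖

noncomputable def frobNorm {m n : ℕ} (M : Matrix (Fin m) (Fin n) ℝ) : ℝ :=
  Real.sqrt (∑ i, ∑ j, (M i j) ^ 2)

noncomputable def euclNorm {k : ℕ} (v : Fin k → ℝ) : ℝ :=
  Real.sqrt (∑ i, (v i) ^ 2)

noncomputable def proj {p r : ℕ} (Γ : Matrix (Fin p) (Fin r) ℝ) : Matrix (Fin p) (Fin p) ℝ :=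
  Γ * (Γᵀ * Γ)⁻¹ * Γᵀ

noncomputable def nthLargestEigenvalue {p : ℕ} (M : Matrix (Fin p) (Fin p) ℝ) (k : ℕ) : ℝ :=
  if h : M.IsHermitian then (List.insertionSort (· ≥ ·) (List.ofFn h.eigenvalues)).getD (k - 1) 0
  else 0

/- ### Auxiliary lemmas -/

section Aux

lemma list_count_aux' {α : Type*} (q : α → Prop) [DecidablePred q] (l : List α) :
    (l.filter (fun a => decide (q a))).length = (l.map fun i => if q i then 1 else 0).sum := by
  induction l with
  | nil => simp
  | cons a l ih =>
    by_cases h : q a <;> simp [List.filter_cons, h, ih, Nat.add_comm]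

lemma countP_ofFn_eq' {n : ℕ} (f : Fin n → ℝ) :
    (List.ofFn f).countP (fun a => decide (a ≠ 0)) = Fintype.card {i // f i ≠ 0} := by
  rw [List.ofFn_eq_map, List.countP_map, Fintype.card_subtype]
  rw [List.countP_eq_length_filter, Finset.card_filter]
  rw [show (Finset.univ : Finset (Fin n)) = ⟨↑(List.finRange n), Multiset.coe_nodup.mpr (List.nodup_finRange n)⟩ from rfl]
  rw [Finset.sum_mk, Multiset.map_coe, Multiset.sum_coe]
  exact list_count_aux' (fun i => f i ≠ 0) (List.finRange n)

lemma sorted_getD_pos_le' {l : List ℝ} (hs : l.Pairwise (· ≥ ·)) (hnn : ∀ a ∈ l, 0 ≤ a)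
    {r : ℕ} (hr : 0 < r) (hcount : l.countP (fun a => decide (a ≠ 0)) = r) :
    0 < l.getD (r-1) 0 ∧ ∀ a ∈ l, a ≠ 0 → l.getD (r-1) 0 ≤ a := by
  have hrlen : r ≤ l.length := hcount ▸ List.countP_le_length
  have hlt : r - 1 < l.length := lt_of_lt_of_le (Nat.pred_lt hr.ne') hrlen
  rw [show l.getD (r-1) 0 = l[r-1] from l.getD_eq_getElem 0 hlt]
  have mono : ∀ (i j : ℕ) (hi : i < l.length) (hj : j < l.length), i ≤ j → l[j] ≤ l[i] := by
    intro i j hi hj hij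
    rcases eq_or_lt_of_le hij with rfl | h
    · exact le_refl _
    · exact hs.rel_get_of_lt (show (⟨i, hi⟩ : Fin l.length) < ⟨j, hj⟩ from h)
  constructor
  · by_contra hle
    push_neg at hle
    have hbound : l.countP (fun a => decide (a ≠ 0)) ≤ r - 1 := by
      have h1 : l.countP (fun a => decide (a ≠ 0)) =
          (l.take (r-1)).countP (fun a => decide (a ≠ 0)) +
          (l.drop (r-1)).countP (fun a => decide (a ≠ 0)) := by
        rw [← List.countP_append, List.take_append_drop]
      have h2 : (l.drop (r-1)).countP (fun a => decide (a ≠ 0)) = 0 := by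
        rw [List.countP_eq_zero]
        intro a ha
        obtain ⟨k, hk, rfl⟩ := List.mem_iff_getElem.mp ha
        have hk' : r - 1 + k < l.length := by
          have := List.length_drop ▸ hk; omega
        have heq : (l.drop (r-1))[k] = l[r-1+k] := List.getElem_drop
        have h3 : l[r - 1 + k] ≤ l[r-1] := mono _ _ hlt hk' (Nat.le_add_right _ _)
        have h4 : 0 ≤ l[r-1+k] := hnn _ (List.getElem_mem hk')
        simp only [heq, ne_eq, decide_eq_true_eq, not_not]
        linarith
      have h5 : (l.take (r-1)).countP (fun a => decide (a ≠ 0)) ≤ r - 1 :=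
        le_trans List.countP_le_length (by rw [List.length_take]; omega)
      omega
    omega
  · intro a ha hane
    obtain ⟨i, hi, rfl⟩ := List.mem_iff_getElem.mp ha
    have hapos : 0 < l[i] := lt_of_le_of_ne (hnn _ ha) (Ne.symm hane)
    by_cases hir : i ≤ r - 1
    · exact mono _ _ hi hlt hir
    · exfalso
      have h1 : l.countP (fun a => decide (a ≠ 0)) =
          (l.take (i+1)).countP (fun a => decide (a ≠ 0)) +
          (l.drop (i+1)).countP (fun a => decide (a ≠ 0)) := by
        rw [← List.countP_append, List.take_append_drop]
      have h2 : (l.take (i+1)).countP (fun a => decide (a ≠ 0)) = (l.take (i+1)).length := by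
        rw [List.countP_eq_length]
        intro a ha'
        obtain ⟨k, hk, rfl⟩ := List.mem_iff_getElem.mp ha'
        have hk2 : k < i + 1 := by
          have := List.length_take ▸ hk; omega
        have hk3 : k < l.length := by omega
        have heq : (l.take (i+1))[k] = l[k] := List.getElem_take
        have hle2 : l[i] ≤ l[k] := mono _ _ hk3 hi (by omega)
        simp only [heq, ne_eq, decide_eq_true_eq]
        intro h; rw [h] at hle2; linarith
      have h3 : (l.take (i+1)).length = i+1 := by rw [List.length_take]; omega
      omega

lemma nthLargest_nonneg' {p : ℕ} {M : Matrix (Fin p) (Fin p) ℝ} (hM : M.PosSemidef) (k : ℕ) :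
    0 ≤ nthLargestEigenvalue M k := by
  rw [nthLargestEigenvalue, dif_pos hM.1]
  set l := List.insertionSort (· ≥ ·) (List.ofFn hM.1.eigenvalues) with hl
  rcases lt_or_ge (k-1) l.length with h | h
  · rw [show l.getD (k-1) 0 = l[k-1] from l.getD_eq_getElem 0 h]
    have hmem : l[k-1] ∈ l := List.getElem_mem h
    have hmem2 : l[k-1] ∈ List.ofFn hM.1.eigenvalues :=
      (List.perm_insertionSort _ _).subset hmem
    obtain ⟨idx, hidx⟩ := List.mem_ofFn.mp hmem2
    exact hidx ▸ hM.eigenvalues_nonneg idx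
  · rw [l.getD_eq_default 0 h]

lemma mulVec_dot' {p : ℕ} (A : Matrix (Fin p) (Fin p) ℝ) (x w : Fin p → ℝ) :
    (A *ᵥ x) ⬝ᵥ w = x ⬝ᵥ (Aᵀ *ᵥ w) := by
  rw [dotProduct_mulVec, vecMul_transpose]

lemma quad' {p : ℕ} {M : Matrix (Fin p) (Fin p) ℝ} (hM : M.IsHermitian)
    {lam : ℝ} (hlam : ∀ k, hM.eigenvalues k ≠ 0 → lam ≤ hM.eigenvalues k)
    (z : Fin p → ℝ) :
    lam * ((M *ᵥ z) ⬝ᵥ (M *ᵥ z)) ≤ (M *ᵥ z) ⬝ᵥ (M *ᵥ (M *ᵥ z)) := by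
  set U : Matrix (Fin p) (Fin p) ℝ := (hM.eigenvectorUnitary : Matrix (Fin p) (Fin p) ℝ) with hU
  set D : Matrix (Fin p) (Fin p) ℝ := diagonal hM.eigenvalues with hDdef
  have hUs : star U * U = 1 := Unitary.coe_star_mul_self hM.eigenvectorUnitary
  have hsU : U * star U = 1 := Unitary.coe_mul_star_self hM.eigenvectorUnitary
  have hD : star U * M * U = D := by
    have := hM.conjStarAlgAut_star_eigenvectorUnitary
    simpa using this
  have hspec : M = U * D * star U := by
    rw [← hD]
    simp only [Matrix.mul_assoc]
    rw [hsU, Matrix.mul_one, ← Matrix.mul_assoc, hsU, Matrix.one_mul]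
  have hDU : star U * M = D * star U := by
    have h : star U * M * U * star U = D * star U := congrArg (fun X => X * star U) hD
    rw [Matrix.mul_assoc (star U * M) U (star U), hsU, Matrix.mul_one] at h
    exact h
  set y : Fin p → ℝ := M *ᵥ z with hy
  set c : Fin p → ℝ := star U *ᵥ y with hc
  have hyUc : U *ᵥ c = y := by
    rw [hc, mulVec_mulVec, hsU, one_mulVec]
  have hUt : Uᵀ = star U := by
    rw [Matrix.star_eq_conjTranspose, conjTranspose_eq_transpose_of_trivial]
  have hdot : ∀ v w : Fin p → ℝ, (U *ᵥ v) ⬝ᵥ (U *ᵥ w) = v ⬝ᵥ w := by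
    intro v w
    rw [mulVec_dot', mulVec_mulVec, hUt, hUs, one_mulVec]
  have h1 : y ⬝ᵥ y = c ⬝ᵥ c := by rw [← hyUc, hdot]
  have hassoc : (U * D * star U) * U = U * D := by
    rw [Matrix.mul_assoc, hUs, Matrix.mul_one]
  have hMy : M *ᵥ y = U *ᵥ (D *ᵥ c) := by
    rw [mulVec_mulVec c U D, ← hassoc, ← mulVec_mulVec, hyUc, ← hspec]
  have h2 : y ⬝ᵥ (M *ᵥ y) = c ⬝ᵥ (D *ᵥ c) := by
    rw [hMy, ← hyUc, hdot]
  have h3 : ∀ k, hM.eigenvalues k = 0 → c k = 0 := by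
    intro k hk
    have hcd : c = D *ᵥ (star U *ᵥ z) := by
      rw [hc, hy, mulVec_mulVec, hDU, ← mulVec_mulVec]
    rw [hcd]
    simp [hDdef, mulVec_diagonal, hk]
  show lam * (y ⬝ᵥ y) ≤ y ⬝ᵥ (M *ᵥ y)
  rw [h1, h2]
  simp only [dotProduct, mulVec_diagonal, hDdef]
  rw [Finset.mul_sum]
  apply Finset.sum_le_sum
  intro k _
  by_cases hck : c k = 0
  · simp [hck]
  · have hne : hM.eigenvalues k ≠ 0 := fun h => hck (h3 k h)
    have hle := mul_le_mul_of_nonneg_right (hlam k hne) (mul_self_nonneg (c k))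
    nlinarith [hle]

lemma dot_single' {p : ℕ} (A : Matrix (Fin p) (Fin p) ℝ) (ℓ : Fin p) :
    (Pi.single ℓ 1 : Fin p → ℝ) ⬝ᵥ (A *ᵥ (Pi.single ℓ 1 : Fin p → ℝ)) = A ℓ ℓ := by
  rw [mulVec_single, single_dotProduct]
  simp

end Aux

/-- entrywise bound on `P_Γ B` from the proof of Proposition 2.1. -/
theorem stmt0 {p r d : ℕ} (Γ : Matrix (Fin p) (Fin r) ℝ) (hΓrank : Γ.rank = r)
    (Sw : Matrix (Fin r) (Fin r) ℝ) (hSw : Sw.PosDef)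
    (B : Matrix (Fin p) (Fin d) ℝ) :
    ∀ (i : Fin p) (j : Fin d),
      |(proj Γ * B) i j| ≤
        Real.sqrt (Finset.univ.sup' ⟨i, Finset.mem_univ i⟩
            (fun ℓ => (Γ * Sw * Γᵀ) ℓ ℓ)) *
          Real.sqrt ((Γ * Sw * Γᵀ) i i) * (∑ ℓ, |B ℓ j|) /
            nthLargestEigenvalue (Γ * Sw * Γᵀ) r := by
  intro i j
  set M : Matrix (Fin p) (Fin p) ℝ := Γ * Sw * Γᵀ with hMdef
  have hMpsd : M.PosSemidef := by
    have := hSw.posSemidef.mul_mul_conjTranspose_same Γ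
    simpa using this
  have hMh : M.IsHermitian := hMpsd.1
  -- nonnegativity of diagonal entries
  have hMdiag : ∀ ℓ, 0 ≤ M ℓ ℓ := by
    intro ℓ
    exact hMpsd.diag_nonneg
  have hsup_nonneg : M i i ≤ Finset.univ.sup' ⟨i, Finset.mem_univ i⟩ (fun ℓ => M ℓ ℓ) :=
    Finset.le_sup' (fun ℓ => M ℓ ℓ) (Finset.mem_univ i)
  rcases Nat.eq_zero_or_pos r with hr0 | hrpos
  · -- degenerate case r = 0 : the projection is the zero matrix
    subst hr0
    have hproj : proj Γ = 0 := by
      ext a b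
      simp [proj, Matrix.mul_apply]
    rw [hproj]
    simp only [Matrix.zero_mul, Matrix.zero_apply, abs_zero]
    apply div_nonneg
    · apply mul_nonneg (mul_nonneg (Real.sqrt_nonneg _) (Real.sqrt_nonneg _))
      exact Finset.sum_nonneg fun ℓ _ => abs_nonneg _
    · exact nthLargest_nonneg' hMpsd 0
  -- main case 0 < r
  -- rank of M
  open scoped MatrixOrder in
  have hMrank : M.rank = r := by
    set S := CFC.sqrt Sw with hS
    have hsq : S * S = Sw := CFC.sqrt_mul_sqrt_self Sw hSw.posSemidef.nonneg
    have hherm : S.IsHermitian := (CFC.sqrt_nonneg Sw).posSemidef.1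
    have h1 : (Γ * S) * (Γ * S)ᴴ = M := by
      rw [conjTranspose_mul, hherm.eq]
      simp only [conjTranspose_eq_transpose_of_trivial]
      rw [show Γ * S * (S * Γᵀ) = Γ * (S * S) * Γᵀ by simp [Matrix.mul_assoc], hsq]
    rw [← h1, rank_self_mul_conjTranspose]
    have hdet : IsUnit S.det := by
      have h2 : S.det * S.det = Sw.det := by rw [← det_mul, hsq]
      have h3 : (0:ℝ) < Sw.det := hSw.det_pos
      refine isUnit_iff_ne_zero.mpr fun h => ?_
      rw [h, mul_zero] at h2; linarith
    rw [rank_mul_eq_left_of_isUnit_det _ _ hdet, hΓrank]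
  -- the eigenvalue lower bound
  set lam : ℝ := nthLargestEigenvalue M r with hlamdef
  have hlam_eq : lam = (List.insertionSort (· ≥ ·)
      (List.ofFn hMh.eigenvalues)).getD (r-1) 0 := by
    rw [hlamdef, nthLargestEigenvalue, dif_pos hMh]
  set l : List ℝ := List.insertionSort (· ≥ ·) (List.ofFn hMh.eigenvalues) with hl
  have hsorted : l.Pairwise (· ≥ ·) := List.pairwise_insertionSort _ _
  have hmem_iff : ∀ a : ℝ, a ∈ l ↔ a ∈ List.ofFn hMh.eigenvalues := fun a =>
    (List.perm_insertionSort _ _).mem_iff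
  have hnn : ∀ a ∈ l, 0 ≤ a := by
    intro a ha
    obtain ⟨idx, hidx⟩ := List.mem_ofFn.mp ((hmem_iff a).mp ha)
    exact hidx ▸ hMpsd.eigenvalues_nonneg idx
  have hcount : l.countP (fun a => decide (a ≠ 0)) = r := by
    rw [hl, (List.perm_insertionSort _ _).countP_eq, countP_ofFn_eq']
    rw [← hMh.rank_eq_card_non_zero_eigs, hMrank]
  obtain ⟨hlam_pos', hlam_le'⟩ := sorted_getD_pos_le' hsorted hnn hrpos hcount
  have hlam_pos : 0 < lam := hlam_eq ▸ hlam_pos'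
  have hlam_le : ∀ k, hMh.eigenvalues k ≠ 0 → lam ≤ hMh.eigenvalues k := by
    intro k hk
    have hmem : hMh.eigenvalues k ∈ l :=
      (hmem_iff _).mpr (List.mem_ofFn.mpr ⟨k, rfl⟩)
    exact hlam_eq ▸ hlam_le' _ hmem hk
  -- projection facts
  set G : Matrix (Fin r) (Fin r) ℝ := Γᵀ * Γ with hGdef
  have hGunit : IsUnit G := by
    have h1 : G.rank = r := by rw [hGdef, rank_transpose_mul_self, hΓrank]
    have h2 : LinearMap.range G.mulVecLin = ⊤ := by
      apply Submodule.eq_top_of_finrank_eq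
      rw [← Matrix.rank, h1]
      simp
    have h3 : Function.Surjective G.mulVecLin := LinearMap.range_eq_top.mp h2
    have h4 : Function.Injective G.mulVecLin :=
      (LinearMap.injective_iff_surjective).mpr h3
    exact Matrix.mulVec_injective_iff_isUnit.mp h4
  have hGdet : IsUnit G.det := (isUnit_iff_isUnit_det G).mp hGunit
  have hSdet : IsUnit Sw.det := (isUnit_iff_isUnit_det Sw).mp hSw.isUnit
  set P : Matrix (Fin p) (Fin p) ℝ := Γ * G⁻¹ * Γᵀ with hPdef
  have hprojP : proj Γ = P := rfl
  have hPG : P * Γ = Γ := by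
    calc P * Γ = Γ * G⁻¹ * (Γᵀ * Γ) := by rw [hPdef, Matrix.mul_assoc]
    _ = Γ * (G⁻¹ * G) := by rw [hGdef, Matrix.mul_assoc]
    _ = Γ := by rw [Matrix.nonsing_inv_mul G hGdet, Matrix.mul_one]
  have hGT : Gᵀ = G := by rw [hGdef, transpose_mul, transpose_transpose]
  have hPT : Pᵀ = P := by
    rw [hPdef, transpose_mul, transpose_mul, transpose_transpose, transpose_nonsing_inv, hGT]
    rw [Matrix.mul_assoc]
  have hPP : P * P = P := by
    have h1 : P * P = P * Γ * G⁻¹ * Γᵀ := by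
      rw [hPdef]; simp only [Matrix.mul_assoc]
    rw [h1, hPG, ← hPdef]
  have hΓTP : Γᵀ * P = Γᵀ := by
    calc Γᵀ * P = Γᵀ * Pᵀ := by rw [hPT]
    _ = (P * Γ)ᵀ := (transpose_mul P Γ).symm
    _ = Γᵀ := by rw [hPG]
  have hMT : Mᵀ = M := by
    rw [← conjTranspose_eq_transpose_of_trivial]; exact hMh
  have hMP : M * P = M := by
    have h1 : M * P = Γ * (Sw * (Γᵀ * P)) := by
      rw [hMdef]; simp only [Matrix.mul_assoc]
    rw [h1, hΓTP, hMdef, Matrix.mul_assoc]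
  have hPM : P * M = M := by
    calc P * M = (Mᵀ * Pᵀ)ᵀ := by rw [← transpose_mul, transpose_transpose]
    _ = (M * P)ᵀ := by rw [hMT, hPT]
    _ = Mᵀ := by rw [hMP]
    _ = M := hMT
  -- P = M * N
  set N : Matrix (Fin p) (Fin p) ℝ := Γ * (G⁻¹ * (Sw⁻¹ * (G⁻¹ * Γᵀ))) with hNdef
  have hPN : M * N = P := by
    rw [hMdef, hNdef, hPdef]
    simp only [Matrix.mul_assoc]
    rw [show Γᵀ * (Γ * (G⁻¹ * (Sw⁻¹ * (G⁻¹ * Γᵀ)))) = G * (G⁻¹ * (Sw⁻¹ * (G⁻¹ * Γᵀ))) by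
      rw [hGdef]; simp only [Matrix.mul_assoc]]
    rw [← Matrix.mul_assoc G G⁻¹ _, Matrix.mul_nonsing_inv G hGdet, Matrix.one_mul]
    rw [← Matrix.mul_assoc Sw Sw⁻¹ _, Matrix.mul_nonsing_inv Sw hSdet, Matrix.one_mul]
  -- quadratic bound
  have hQuad : ∀ x : Fin p → ℝ, lam * (x ⬝ᵥ (P *ᵥ x)) ≤ x ⬝ᵥ (M *ᵥ x) := by
    intro x
    set z : Fin p → ℝ := N *ᵥ x with hz
    have hyz : P *ᵥ x = M *ᵥ z := by
      rw [hz, mulVec_mulVec, hPN]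
    have h1 : x ⬝ᵥ (P *ᵥ x) = (P *ᵥ x) ⬝ᵥ (P *ᵥ x) := by
      calc x ⬝ᵥ (P *ᵥ x) = x ⬝ᵥ ((P * P) *ᵥ x) := by rw [hPP]
      _ = x ⬝ᵥ (P *ᵥ (P *ᵥ x)) := by rw [mulVec_mulVec]
      _ = (P *ᵥ x) ⬝ᵥ (P *ᵥ x) := by
        rw [mulVec_dot' P x (P *ᵥ x), hPT]
    have h2 : x ⬝ᵥ (M *ᵥ x) = (P *ᵥ x) ⬝ᵥ (M *ᵥ (P *ᵥ x)) := by
      rw [mulVec_mulVec, hMP]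
      rw [mulVec_dot' P x (M *ᵥ x), hPT]
      rw [mulVec_mulVec, hPM]
    rw [h1, h2, hyz]
    exact quad' hMh hlam_le z
  -- diagonal bound
  have hdiag : ∀ ℓ, lam * P ℓ ℓ ≤ M ℓ ℓ := by
    intro ℓ
    have := hQuad (Pi.single ℓ 1)
    rwa [dot_single', dot_single'] at this
  -- entries of P via Pᵀ * P
  have hPTP : Pᵀ * P = P := by rw [hPT, hPP]
  have hPentry : ∀ a b, P a b = ∑ k, P k a * P k b := by
    intro a b
    conv_lhs => rw [← hPTP]
    rw [Matrix.mul_apply]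
    simp [transpose_apply]
  have hPdiag_nonneg : ∀ a, 0 ≤ P a a := by
    intro a
    rw [hPentry a a]
    exact Finset.sum_nonneg fun k _ => mul_self_nonneg _
  have hCS : ∀ a b, (P a b)^2 ≤ P a a * P b b := by
    intro a b
    rw [hPentry a b, hPentry a a, hPentry b b]
    have := Finset.sum_mul_sq_le_sq_mul_sq Finset.univ (fun k => P k a) (fun k => P k b)
    simpa [pow_two] using this
  -- entrywise bound on P
  have habs : ∀ a b, |P a b| ≤ Real.sqrt (M a a) * Real.sqrt (M b b) / lam := by
    intro a b
    have h1 : ∀ c, P c c ≤ M c c / lam := by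
      intro c
      rw [le_div_iff₀ hlam_pos, mul_comm]
      exact hdiag c
    have h2 : (P a b)^2 ≤ (M a a / lam) * (M b b / lam) := by
      calc (P a b)^2 ≤ P a a * P b b := hCS a b
      _ ≤ (M a a / lam) * (M b b / lam) := by
        apply mul_le_mul (h1 a) (h1 b) (hPdiag_nonneg b)
        exact div_nonneg (hMdiag a) hlam_pos.le
    have h3 : |P a b| = Real.sqrt ((P a b)^2) := (Real.sqrt_sq_eq_abs _).symm
    rw [h3]
    calc Real.sqrt ((P a b)^2) ≤ Real.sqrt ((M a a / lam) * (M b b / lam)) :=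
      Real.sqrt_le_sqrt h2
    _ = Real.sqrt (M a a) * Real.sqrt (M b b) / lam := by
      rw [show (M a a / lam) * (M b b / lam) = (M a a * M b b) / lam^2 by ring]
      rw [Real.sqrt_div (mul_nonneg (hMdiag a) (hMdiag b)), Real.sqrt_sq hlam_pos.le]
      rw [Real.sqrt_mul (hMdiag a)]
  -- final assembly
  set K : ℝ := Real.sqrt (Finset.univ.sup' ⟨i, Finset.mem_univ i⟩ (fun ℓ => M ℓ ℓ)) with hK
  have hentry_bound : ∀ ℓ, |P i ℓ| ≤ K * Real.sqrt (M i i) / lam := by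
    intro ℓ
    calc |P i ℓ| ≤ Real.sqrt (M i i) * Real.sqrt (M ℓ ℓ) / lam := habs i ℓ
    _ ≤ Real.sqrt (M i i) * K / lam := by
      have hK' : Real.sqrt (M ℓ ℓ) ≤ K :=
        Real.sqrt_le_sqrt (Finset.le_sup' (fun ℓ => M ℓ ℓ) (Finset.mem_univ ℓ))
      gcongr
    _ = K * Real.sqrt (M i i) / lam := by ring
  rw [hprojP, Matrix.mul_apply]
  calc |∑ ℓ, P i ℓ * B ℓ j| ≤ ∑ ℓ, |P i ℓ * B ℓ j| := Finset.abs_sum_le_sum_abs _ _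
  _ = ∑ ℓ, |P i ℓ| * |B ℓ j| := by simp [abs_mul]
  _ ≤ ∑ ℓ, (K * Real.sqrt (M i i) / lam) * |B ℓ j| := by
    apply Finset.sum_le_sum
    intro ℓ _
    exact mul_le_mul_of_nonneg_right (hentry_bound ℓ) (abs_nonneg _)
  _ = K * Real.sqrt (M i i) * (∑ ℓ, |B ℓ j|) / lam := by
    rw [← Finset.mul_sum]; ring
end

section
/- Let Γ be a real p×r matrix of full column rank r, let Σ_w be a symmetric positive definite r×r real matrix, and let B be a real p×d matrix. Let λ_r(ΓΣ_wΓᵀ) denote the r-th largest eigenvalue of ΓΣ_wΓᵀ. Then ‖P_Γ B‖_F ≤ √p · (max_{1≤ℓ≤p} (ΓΣ_wΓᵀ)_{ℓℓ}) · ‖B‖_{1,1} / λ_r(ΓΣ_wΓᵀ). (Quantitative Frobenius-norm bound of Proposition 2.1 on the non-identified component P_Γ B of the direct effects.) -/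
open Matrix MeasureTheory
open scoped BigOperators ENNReal

section Aux

private lemma aux_sorted_pos (l : List ℝ) (hs : l.Pairwise (· ≥ ·)) (k : ℕ) (hk : k < l.length)
    (hc : k < l.countP (fun x => decide (0 < x))) : 0 < l.get ⟨k, hk⟩ := by
  induction l generalizing k with
  | nil => simp at hk
  | cons a t ih =>
    have hs' : t.Pairwise (· ≥ ·) := hs.of_cons
    cases k with
    | zero =>
      simp only [List.get]
      by_contra h
      push_neg at h
      have : (a :: t).countP (fun x => decide (0 < x)) = 0 := by
        rw [List.countP_eq_zero]
        intro x hx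
        simp only [decide_eq_true_eq, not_lt]
        rcases List.mem_cons.mp hx with rfl | hx
        · exact h
        · exact le_trans (List.rel_of_pairwise_cons hs hx) h
      omega
    | succ k =>
      have hck : k < t.countP (fun x => decide (0 < x)) := by
        by_cases h0 : (0:ℝ) < a
        · rw [List.countP_cons_of_pos (l := t) (a := a) (p := fun x => decide ((0:ℝ) < x)) (by simpa using h0)] at hc; omega
        · rw [List.countP_cons_of_neg (l := t) (a := a) (p := fun x => decide ((0:ℝ) < x)) (by simpa using h0)] at hc; omega
      exact ih hs' k (by simpa using hk) hck

private lemma aux_sorted_min (l : List ℝ) (hs : l.Pairwise (· ≥ ·)) (k : ℕ) (hk : k < l.length)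
    (hc : l.countP (fun x => decide (0 < x)) ≤ k + 1) :
    ∀ x ∈ l, 0 < x → l.get ⟨k, hk⟩ ≤ x := by
  induction l generalizing k with
  | nil => simp
  | cons a t ih =>
    have hs' : t.Pairwise (· ≥ ·) := hs.of_cons
    intro x hx hxpos
    cases k with
    | zero =>
      simp only [List.get]
      rcases List.mem_cons.mp hx with h | hx'
      · rw [h]
      · exfalso
        have ha : (0:ℝ) < a := lt_of_lt_of_le hxpos (List.rel_of_pairwise_cons hs hx')
        have hct : 0 < t.countP (fun x => decide (0 < x)) :=
          List.countP_pos_iff.mpr ⟨x, hx', by simpa using hxpos⟩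
        rw [List.countP_cons_of_pos (l := t) (a := a) (p := fun x => decide ((0:ℝ) < x)) (by simpa using ha)] at hc
        omega
    | succ k =>
      have hk' : k < t.length := by simpa using hk
      rcases List.mem_cons.mp hx with h | hx'
      · have hmem : (a :: t).get ⟨k+1, hk⟩ ∈ t := by
          simpa using List.get_mem t ⟨k, hk'⟩
        rw [h]
        exact List.rel_of_pairwise_cons hs hmem
      · have ha : (0:ℝ) < a := lt_of_lt_of_le hxpos (List.rel_of_pairwise_cons hs hx')
        have hct : t.countP (fun x => decide (0 < x)) ≤ k + 1 := by
          rw [List.countP_cons_of_pos (l := t) (a := a) (p := fun x => decide ((0:ℝ) < x)) (by simpa using ha)] at hc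
          omega
        exact ih hs' k hk' hct x hx' hxpos

private lemma aux_countP_ofFn {n : ℕ} (f : Fin n → ℝ) :
    (List.ofFn f).countP (fun x => decide (0 < x)) = Fintype.card {i // 0 < f i} := by
  classical
  rw [List.ofFn_eq_map, List.countP_map, Fintype.card_subtype]
  rw [List.countP_eq_length_filter]
  have h1 : (Finset.filter (fun x => 0 < f x) Finset.univ).card
      = (List.filter (fun i => decide (0 < f i)) (List.finRange n)).toFinset.card := by
    congr 1
    ext i
    simp [List.mem_filter, List.mem_finRange]
  rw [h1, List.toFinset_card_of_nodup ((List.nodup_finRange n).filter _)]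
  rfl

private lemma aux_euclNorm_eq_norm {p : ℕ} (v : Fin p → ℝ) :
    euclNorm v = ‖(WithLp.equiv 2 (Fin p → ℝ)).symm v‖ := by
  rw [EuclideanSpace.norm_eq]
  unfold euclNorm
  congr 1
  exact Finset.sum_congr rfl fun i _ => by
    rw [WithLp.equiv_symm_apply, WithLp.ofLp_toLp, Real.norm_eq_abs, sq_abs]

private lemma aux_specA {p : ℕ} {M : Matrix (Fin p) (Fin p) ℝ} (hM : M.IsHermitian) {lam : ℝ}
    (hlam0 : 0 ≤ lam)
    (hlam : ∀ i, hM.eigenvalues i ≠ 0 → lam ≤ hM.eigenvalues i)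
    (v : Fin p → ℝ) (hv : ∀ x : Fin p → ℝ, M *ᵥ x = 0 → x ⬝ᵥ v = 0) :
    lam * euclNorm v ≤ euclNorm (M *ᵥ v) := by
  classical
  set b := hM.eigenvectorBasis with hb
  set μ := hM.eigenvalues with hμ
  set x : EuclideanSpace ℝ (Fin p) := (WithLp.equiv 2 (Fin p → ℝ)).symm v with hx
  set w : EuclideanSpace ℝ (Fin p) := (WithLp.equiv 2 (Fin p → ℝ)).symm (M *ᵥ v) with hw
  have hinner : ∀ (y : EuclideanSpace ℝ (Fin p)) (z : EuclideanSpace ℝ (Fin p)),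
      inner (𝕜 := ℝ) y z = (⇑y) ⬝ᵥ (⇑z) := by
    intro y z
    simp [PiLp.inner_apply, dotProduct, RCLike.inner_apply, mul_comm]
  have hrepr : ∀ i, b.repr w i = μ i * b.repr x i := by
    intro i
    rw [b.repr_apply_apply, b.repr_apply_apply, hinner, hinner]
    have hcw : (⇑w : Fin p → ℝ) = M *ᵥ v := rfl
    have hcx : (⇑x : Fin p → ℝ) = v := rfl
    rw [hcw, hcx, dotProduct_mulVec]
    have hsymm : (⇑(b i) : Fin p → ℝ) ᵥ* M = M *ᵥ (⇑(b i) : Fin p → ℝ) := by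
      nth_rewrite 1 [← hM.eq]
      rw [conjTranspose_eq_transpose_of_trivial, vecMul_transpose]
    rw [hsymm, hM.mulVec_eigenvectorBasis]
    simp [smul_dotProduct, smul_eq_mul]
    rfl
  have hzero : ∀ i, μ i = 0 → b.repr x i = 0 := by
    intro i hi
    rw [b.repr_apply_apply, hinner]
    apply hv
    rw [hM.mulVec_eigenvectorBasis, ← hμ, hi, zero_smul]
  have hnx : euclNorm v = ‖x‖ := aux_euclNorm_eq_norm v
  have hnw : euclNorm (M *ᵥ v) = ‖w‖ := aux_euclNorm_eq_norm _
  rw [hnx, hnw, ← b.repr.norm_map x, ← b.repr.norm_map w]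
  rw [EuclideanSpace.norm_eq, EuclideanSpace.norm_eq]
  have key : ∑ i, lam ^ 2 * ‖b.repr x i‖ ^ 2 ≤ ∑ i, ‖b.repr w i‖ ^ 2 := by
    apply Finset.sum_le_sum
    intro i _
    rw [hrepr i]
    by_cases hi : μ i = 0
    · rw [hzero i hi]; simp
    · have h1 : lam ≤ μ i := hlam i hi
      rw [Real.norm_eq_abs, Real.norm_eq_abs, abs_mul, mul_pow]
      have h2 : lam ^ 2 ≤ |μ i| ^ 2 := by rw [sq_abs]; nlinarith
      exact mul_le_mul_of_nonneg_right h2 (by positivity)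
  calc lam * Real.sqrt (∑ i, ‖b.repr x i‖ ^ 2)
      = Real.sqrt (∑ i, lam ^ 2 * ‖b.repr x i‖ ^ 2) := by
        rw [← Finset.mul_sum, Real.sqrt_mul (by positivity), Real.sqrt_sq hlam0]
    _ ≤ Real.sqrt (∑ i, ‖b.repr w i‖ ^ 2) := Real.sqrt_le_sqrt key

private lemma aux_diag_nonneg {p : ℕ} {M : Matrix (Fin p) (Fin p) ℝ} (hpsd : M.PosSemidef)
    (i : Fin p) : 0 ≤ M i i := by
  have h := hpsd.dotProduct_mulVec_nonneg (Pi.single i (1:ℝ))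
  simpa [dotProduct_single, mulVec_single] using h

private lemma aux_entry_bound {p : ℕ} {M : Matrix (Fin p) (Fin p) ℝ} (hpsd : M.PosSemidef)
    (i k : Fin p) : |M i k| ≤ (M i i + M k k) / 2 := by
  have hsym : M k i = M i k := by
    have h2 : Mᵀ = M := by
      rw [← conjTranspose_eq_transpose_of_trivial]; exact hpsd.isHermitian.eq
    calc M k i = Mᵀ i k := rfl
      _ = M i k := by rw [h2]
  have hplus := hpsd.dotProduct_mulVec_nonneg (Pi.single i (1:ℝ) + Pi.single k 1)
  have hminus := hpsd.dotProduct_mulVec_nonneg (Pi.single i (1:ℝ) - Pi.single k 1)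
  simp only [star_trivial, mulVec_add, mulVec_sub, dotProduct_add, dotProduct_sub,
    add_dotProduct, sub_dotProduct, mulVec_single, dotProduct_single, single_dotProduct,
    mul_one, one_mul, RCLike.re_to_real] at hplus hminus
  rw [abs_le]
  constructor <;> [skip; skip] <;> simp -failIfUnchanged only [Matrix.mulVec_single, MulOpposite.op_one, one_smul, Matrix.col_apply] at * <;>
    nlinarith [hplus, hminus, hsym]

end Aux

/-- Frobenius-norm bound of Proposition 2.1 on the non-identified
component `P_Γ B` of the direct effects. -/
theorem stmt1 {p r d : ℕ} (Γ : Matrix (Fin p) (Fin r) ℝ) (hΓrank : Γ.rank = r)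
    (Sw : Matrix (Fin r) (Fin r) ℝ) (hSw : Sw.PosDef)
    (B : Matrix (Fin p) (Fin d) ℝ) :
    frobNorm (proj Γ * B) ≤
      Real.sqrt p * (⨆ ℓ : Fin p, (Γ * Sw * Γᵀ) ℓ ℓ) * (∑ i, ∑ j, |B i j|) /
        nthLargestEigenvalue (Γ * Sw * Γᵀ) r := by
  classical
  have hMpsd : (Γ * Sw * Γᵀ).PosSemidef := by
    have h := hSw.posSemidef.mul_mul_conjTranspose_same Γ
    rwa [conjTranspose_eq_transpose_of_trivial] at h
  have hM : (Γ * Sw * Γᵀ).IsHermitian := hMpsd.isHermitian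
  set M := Γ * Sw * Γᵀ with hMdef
  rcases Nat.eq_zero_or_pos r with hr0 | hrpos
  · -- degenerate case r = 0
    subst hr0
    have hproj0 : proj Γ * B = 0 := by
      ext i j
      simp [proj, Matrix.mul_apply]
    have hM0 : M = 0 := by
      ext i j
      simp [hMdef, Matrix.mul_apply]
    have hsup : (⨆ ℓ : Fin p, M ℓ ℓ) = 0 := by
      rcases isEmpty_or_nonempty (Fin p) with hpe | hpn
      · rw [iSup, Set.range_eq_empty, Real.sSup_empty]
      · simp [hM0]
    rw [hproj0, hsup]
    simp [frobNorm]
  -- main case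
  have hrp : r ≤ p := by
    rw [← hΓrank]
    simpa using Γ.rank_le_card_height
  have hp : 0 < p := lt_of_lt_of_le hrpos hrp
  haveI : Nonempty (Fin p) := ⟨⟨0, hp⟩⟩
  -- invertibility of Γᵀ * Γ
  have hGdet : IsUnit (Γᵀ * Γ).det := by
    have hrk : (Γᵀ * Γ).rank = r := by rw [rank_transpose_mul_self, hΓrank]
    rw [← isUnit_iff_isUnit_det, ← Matrix.mulVec_injective_iff_isUnit]
    have hrange : LinearMap.range (Γᵀ * Γ).mulVecLin = ⊤ := by
      apply Submodule.eq_top_of_finrank_eq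
      rw [← Matrix.rank, hrk]
      simp [Module.finrank_pi]
    have hsurj : Function.Surjective (Γᵀ * Γ).mulVecLin := LinearMap.range_eq_top.mp hrange
    have hinj : Function.Injective (Γᵀ * Γ).mulVecLin :=
      LinearMap.injective_iff_surjective.mpr hsurj
    exact fun x y hxy => hinj (show (Γᵀ * Γ).mulVecLin x = (Γᵀ * Γ).mulVecLin y by
      rw [Matrix.mulVecLin_apply, Matrix.mulVecLin_apply]; exact hxy)
  -- M * proj Γ = M
  have hMproj : M * proj Γ = M := by
    have h1 : Γᵀ * proj Γ = Γᵀ := by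
      unfold proj
      rw [← Matrix.mul_assoc, ← Matrix.mul_assoc Γᵀ Γ, Matrix.mul_nonsing_inv _ hGdet,
        Matrix.one_mul]
    calc M * proj Γ = (Γ * Sw) * (Γᵀ * proj Γ) := by rw [hMdef, Matrix.mul_assoc]
      _ = M := by rw [h1, hMdef, Matrix.mul_assoc]
  -- rank of M
  have hrankM : M.rank = r := by
    set Q := (open scoped MatrixOrder in CFC.sqrt Sw) with hQdef
    have hQherm : Qᵀ = Q := by
      rw [← conjTranspose_eq_transpose_of_trivial]
      exact (open scoped MatrixOrder in (CFC.sqrt_nonneg Sw).posSemidef.isHermitian.eq)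
    have hQQ : Q * Q = Sw := open scoped MatrixOrder in CFC.sqrt_mul_sqrt_self Sw hSw.posSemidef.nonneg
    have hQdet : IsUnit Q.det := by
      have hdet : Q.det * Q.det = Sw.det := by rw [← det_mul, hQQ]
      have hS0 : Sw.det ≠ 0 := ne_of_gt hSw.det_pos
      exact isUnit_iff_ne_zero.mpr fun h => hS0 (by rw [← hdet, h, mul_zero])
    have hfact : M = (Γ * Q) * (Γ * Q)ᵀ := by
      rw [hMdef, transpose_mul, hQherm, ← Matrix.mul_assoc, Matrix.mul_assoc Γ Q Q, hQQ]
    rw [hfact, rank_self_mul_transpose, rank_mul_eq_left_of_isUnit_det Q Γ hQdet, hΓrank]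
  have hcard : Fintype.card {i // hM.eigenvalues i ≠ 0} = r := by
    rw [← hM.rank_eq_card_non_zero_eigs]
    exact hrankM
  have hμ0 : ∀ i, 0 ≤ hM.eigenvalues i := fun i => hMpsd.eigenvalues_nonneg i
  -- the sorted eigenvalue list
  set l := List.insertionSort (· ≥ ·) (List.ofFn hM.eigenvalues) with hl
  have hlen : l.length = p := by
    rw [hl, List.length_insertionSort, List.length_ofFn]
  have hk : r - 1 < l.length := by omega
  have hsort : l.Pairwise (· ≥ ·) := List.pairwise_insertionSort _ _
  have hperm : List.Perm l (List.ofFn hM.eigenvalues) := List.perm_insertionSort _ _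
  have hcount : l.countP (fun x => decide (0 < x)) = r := by
    rw [hperm.countP_eq, aux_countP_ofFn]
    rw [← hcard]
    apply Fintype.card_congr
    exact Equiv.subtypeEquivRight fun i =>
      ⟨fun h => ne_of_gt h, fun h => lt_of_le_of_ne (hμ0 i) (Ne.symm h)⟩
  set lam := l.get ⟨r - 1, hk⟩ with hlamdef
  have hlam_eq : nthLargestEigenvalue M r = lam := by
    rw [nthLargestEigenvalue, dif_pos hM]
    rw [hlamdef]
    rw [show List.insertionSort (· ≥ ·) (List.ofFn hM.eigenvalues) = l from hl.symm]
    rw [List.getD_eq_getElem?_getD, List.getElem?_eq_getElem hk]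
    rfl
  have hlampos : 0 < lam := aux_sorted_pos l hsort _ hk (by omega)
  have hlammin : ∀ i, hM.eigenvalues i ≠ 0 → lam ≤ hM.eigenvalues i := by
    intro i hi
    refine aux_sorted_min l hsort _ hk (by omega) _ ?_ (lt_of_le_of_ne (hμ0 i) (Ne.symm hi))
    rw [hperm.mem_iff]
    exact List.mem_ofFn.mpr ⟨i, rfl⟩
  -- kernel property
  have hker : ∀ x : Fin p → ℝ, M *ᵥ x = 0 → Γᵀ *ᵥ x = 0 := by
    intro x hx
    by_contra hy
    have h1 : (0:ℝ) < (Γᵀ *ᵥ x) ⬝ᵥ (Sw *ᵥ (Γᵀ *ᵥ x)) := by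
      have := hSw.dotProduct_mulVec_pos hy
      simpa using this
    have h2 : x ⬝ᵥ (M *ᵥ x) = (Γᵀ *ᵥ x) ⬝ᵥ (Sw *ᵥ (Γᵀ *ᵥ x)) := by
      rw [hMdef, Matrix.mul_assoc, ← Matrix.mulVec_mulVec, dotProduct_mulVec]
      have hxv : x ᵥ* Γ = Γᵀ *ᵥ x := by
        rw [show Γ = (Γᵀ)ᵀ from (transpose_transpose Γ).symm, vecMul_transpose,
          transpose_transpose]
      rw [hxv, ← Matrix.mulVec_mulVec]
    rw [hx, dotProduct_zero] at h2
    rw [← h2] at h1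
    exact lt_irrefl 0 h1
  -- sup of diagonal
  set supD := ⨆ ℓ : Fin p, M ℓ ℓ with hsd
  have hbdd : BddAbove (Set.range fun ℓ : Fin p => M ℓ ℓ) := (Set.finite_range _).bddAbove
  have hdiag_le : ∀ i, M i i ≤ supD := fun i => le_ciSup hbdd i
  have hsupD0 : 0 ≤ supD := le_trans (aux_diag_nonneg hMpsd ⟨0, hp⟩) (hdiag_le _)
  have hentry : ∀ i k : Fin p, |M i k| ≤ supD := fun i k =>
    (aux_entry_bound hMpsd i k).trans (by
      have h1 := hdiag_le i; have h2 := hdiag_le k; linarith)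
  -- column bound for M *ᵥ b
  have hcol : ∀ b : Fin p → ℝ, euclNorm (M *ᵥ b) ≤ Real.sqrt p * supD * (∑ k, |b k|) := by
    intro b
    have hbk0 : (0:ℝ) ≤ ∑ k, |b k| := Finset.sum_nonneg fun k _ => abs_nonneg _
    have hbd : ∀ i, |(M *ᵥ b) i| ≤ supD * ∑ k, |b k| := by
      intro i
      calc |(M *ᵥ b) i| = |∑ k, M i k * b k| := rfl
        _ ≤ ∑ k, |M i k * b k| := Finset.abs_sum_le_sum_abs _ _
        _ ≤ ∑ k, supD * |b k| := Finset.sum_le_sum fun k _ => by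
              rw [abs_mul]; exact mul_le_mul_of_nonneg_right (hentry i k) (abs_nonneg _)
        _ = supD * ∑ k, |b k| := by rw [Finset.mul_sum]
    have hsum : ∑ i, ((M *ᵥ b) i)^2 ≤ ∑ _i : Fin p, (supD * ∑ k, |b k|)^2 := by
      refine Finset.sum_le_sum fun i _ => ?_
      have h := hbd i
      calc ((M *ᵥ b) i)^2 = |(M *ᵥ b) i|^2 := (sq_abs _).symm
        _ ≤ (supD * ∑ k, |b k|)^2 := by nlinarith [abs_nonneg ((M *ᵥ b) i)]
    unfold euclNorm
    calc Real.sqrt (∑ i, ((M *ᵥ b) i)^2)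
        ≤ Real.sqrt (∑ _i : Fin p, (supD * ∑ k, |b k|)^2) := Real.sqrt_le_sqrt hsum
      _ = Real.sqrt (p * (supD * ∑ k, |b k|)^2) := by
          rw [Finset.sum_const, Finset.card_univ, Fintype.card_fin, nsmul_eq_mul]
      _ = Real.sqrt p * (supD * ∑ k, |b k|) := by
          rw [Real.sqrt_mul (by positivity), Real.sqrt_sq (by positivity)]
      _ = Real.sqrt p * supD * (∑ k, |b k|) := by ring
  -- per column estimate
  have hcolmain : ∀ j : Fin d, euclNorm (fun i => (proj Γ * B) i j)
      ≤ Real.sqrt p * supD * (∑ i, |B i j|) / lam := by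
    intro j
    set bcol : Fin p → ℝ := fun i => B i j with hbcol
    have hveq : (fun i => (proj Γ * B) i j) = proj Γ *ᵥ bcol := by
      funext i
      simp [Matrix.mul_apply, Matrix.mulVec, dotProduct]
      rfl
    set v := proj Γ *ᵥ bcol with hv
    have hMv : M *ᵥ v = M *ᵥ bcol := by
      rw [hv, Matrix.mulVec_mulVec, hMproj]
    have hvker : ∀ x, M *ᵥ x = 0 → x ⬝ᵥ v = 0 := by
      intro x hx
      have h0 : Γᵀ *ᵥ x = 0 := hker x hx
      have hvrw : v = Γ *ᵥ (((Γᵀ * Γ)⁻¹ * Γᵀ) *ᵥ bcol) := by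
        rw [hv, Matrix.mulVec_mulVec, proj, Matrix.mul_assoc]
      rw [hvrw, dotProduct_mulVec]
      have hxv : x ᵥ* Γ = Γᵀ *ᵥ x := by
        rw [show Γ = (Γᵀ)ᵀ from (transpose_transpose Γ).symm, vecMul_transpose,
          transpose_transpose]
      rw [hxv, h0, zero_dotProduct]
    have h1 := aux_specA hM (le_of_lt hlampos) hlammin v hvker
    rw [hMv] at h1
    have h2 := hcol bcol
    rw [hveq, le_div_iff₀ hlampos]
    calc euclNorm v * lam = lam * euclNorm v := mul_comm _ _
      _ ≤ euclNorm (M *ᵥ bcol) := h1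
      _ ≤ Real.sqrt p * supD * (∑ i, |B i j|) := h2
  -- assemble
  set a : Fin d → ℝ := fun j => euclNorm (fun i => (proj Γ * B) i j) with ha
  have ha0 : ∀ j, 0 ≤ a j := fun j => Real.sqrt_nonneg _
  have hfrob : frobNorm (proj Γ * B) = Real.sqrt (∑ j, (a j)^2) := by
    unfold frobNorm
    rw [Finset.sum_comm]
    congr 1
    refine Finset.sum_congr rfl fun j _ => ?_
    rw [ha]
    simp only [euclNorm]
    rw [Real.sq_sqrt (Finset.sum_nonneg fun i _ => sq_nonneg _)]
  have hsum_sq : Real.sqrt (∑ j, (a j)^2) ≤ ∑ j, a j := by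
    have hS0 : (0:ℝ) ≤ ∑ j, a j := Finset.sum_nonneg fun j _ => ha0 j
    have h1 : ∑ j, (a j)^2 ≤ (∑ j, a j)^2 := by
      calc ∑ j, (a j)^2 ≤ ∑ j, a j * (∑ j', a j') := by
            refine Finset.sum_le_sum fun j _ => ?_
            rw [pow_two]
            exact mul_le_mul_of_nonneg_left
              (Finset.single_le_sum (fun j' _ => ha0 j') (Finset.mem_univ j)) (ha0 j)
        _ = (∑ j, a j)^2 := by rw [← Finset.sum_mul, pow_two]
    calc Real.sqrt (∑ j, (a j)^2) ≤ Real.sqrt ((∑ j, a j)^2) := Real.sqrt_le_sqrt h1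
      _ = ∑ j, a j := Real.sqrt_sq hS0
  rw [hlam_eq]
  calc frobNorm (proj Γ * B) = Real.sqrt (∑ j, (a j)^2) := hfrob
    _ ≤ ∑ j, a j := hsum_sq
    _ ≤ ∑ j, Real.sqrt p * supD * (∑ i, |B i j|) / lam :=
        Finset.sum_le_sum fun j _ => hcolmain j
    _ = Real.sqrt p * supD * (∑ i, ∑ j, |B i j|) / lam := by
        rw [← Finset.sum_div, ← Finset.mul_sum, Finset.sum_comm]
end

section
/- Let R ⊆ ℝ be an open interval and A : ℝ → ℝ be twice differentiable on R with A''(θ) ≥ κ₁ > 0 for all θ ∈ R. Let Y, Θ̂, Θ* ∈ ℝ^{n×p} with all entries of Θ̂ and Θ* in R, rank(Θ̂) ≤ d + r, rank(Θ*) ≤ d + r, and suppose L(Θ̂) ≤ L(Θ*). Then ‖Θ̂ − Θ*‖_F ≤ (2√(2(d+r)) / κ₁) · ‖Y − A'(Θ*)‖_op. (Deterministic core of Theorem 3.1 bounding the estimation error of the joint maximum likelihood estimate of the natural parameter matrix.) -/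
open Matrix MeasureTheory
open scoped BigOperators ENNReal

/-- Negative log-likelihood `L(Θ) = (1/n)(−tr(YᵀΘ) + Σ_{i,j} A(Θ_{ij}))`. -/
noncomputable def negLogLik {n p : ℕ} (A : ℝ → ℝ)
    (Y Θ : Matrix (Fin n) (Fin p) ℝ) : ℝ :=
  (1 / (n : ℝ)) * (-(Yᵀ * Θ).trace + ∑ i, ∑ j, A (Θ i j))


-- Taylor / strong convexity lower bound
lemma taylor_lb (R : Set ℝ) (hRopen : IsOpen R) (hRconv : Convex ℝ R)
    (A A' A'' : ℝ → ℝ)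
    (hA' : ∀ θ ∈ R, HasDerivAt A (A' θ) θ)
    (hA'' : ∀ θ ∈ R, HasDerivAt A' (A'' θ) θ)
    (κ₁ : ℝ) (hκ₁le : ∀ θ ∈ R, κ₁ ≤ A'' θ)
    {x y : ℝ} (hx : x ∈ R) (hy : y ∈ R) :
    A x + A' x * (y - x) + κ₁ / 2 * (y - x) ^ 2 ≤ A y := by
  set g : ℝ → ℝ := fun t => A t - κ₁ / 2 * t ^ 2 with hg
  have hg' : ∀ t ∈ R, HasDerivAt g (A' t - κ₁ * t) t := by
    intro t ht
    have h2 : HasDerivAt (fun s : ℝ => κ₁ / 2 * s ^ 2) (κ₁ * t) t := by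
      have := (hasDerivAt_pow 2 t).const_mul (κ₁ / 2)
      refine this.congr_deriv ?_
      norm_num
      ring
    exact (hA' t ht).sub h2
  have hg'' : ∀ t ∈ R, HasDerivAt (fun s => A' s - κ₁ * s) (A'' t - κ₁) t := by
    intro t ht
    have h1 : HasDerivAt (fun s : ℝ => κ₁ * s) (κ₁ * 1) t := (hasDerivAt_id t).const_mul κ₁
    exact ((hA'' t ht).sub h1).congr_deriv (by ring)
  have hint : interior R = R := hRopen.interior_eq
  have hconv : ConvexOn ℝ R g := by
    refine convexOn_of_hasDerivWithinAt2_nonneg (f' := fun t => A' t - κ₁ * t) (f'' := fun t => A'' t - κ₁) hRconv ?_ ?_ ?_ ?_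
    · exact fun t ht => ((hg' t ht).continuousAt).continuousWithinAt
    · intro t ht; rw [hint] at ht ⊢; exact (hg' t ht).hasDerivWithinAt
    · intro t ht; rw [hint] at ht ⊢; exact (hg'' t ht).hasDerivWithinAt
    · intro t ht; rw [hint] at ht
      have := hκ₁le t ht; show 0 ≤ A'' t - κ₁; linarith
  rcases lt_trichotomy x y with hxy | hxy | hxy
  · have h := hconv.le_slope_of_hasDerivAt hx hy hxy (hg' x hx)
    rw [slope_def_field] at h
    have h2 : (A' x - κ₁ * x) * (y - x) ≤ g y - g x := by
      have hpos : 0 < y - x := by linarith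
      calc (A' x - κ₁ * x) * (y - x) ≤ (g y - g x) / (y - x) * (y - x) := by
            exact mul_le_mul_of_nonneg_right h hpos.le
        _ = g y - g x := by field_simp
    simp only [hg] at h2
    nlinarith [h2]
  · subst hxy; simp
  · have h := hconv.slope_le_of_hasDerivAt hy hx hxy (hg' x hx)
    rw [slope_def_field] at h
    have hpos : 0 < x - y := by linarith
    have h2 : g x - g y ≤ (A' x - κ₁ * x) * (x - y) := by
      calc g x - g y = (g x - g y) / (x - y) * (x - y) := by field_simp
        _ ≤ (A' x - κ₁ * x) * (x - y) := mul_le_mul_of_nonneg_right h hpos.le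
    simp only [hg] at h2
    nlinarith [h2]

lemma cs_sum {k : ℕ} (f g : Fin k → ℝ) : ∑ i, f i * g i ≤ euclNorm f * euclNorm g := by
  have h := Finset.sum_mul_sq_le_sq_mul_sq Finset.univ f g
  calc ∑ i, f i * g i ≤ |∑ i, f i * g i| := le_abs_self _
    _ = Real.sqrt ((∑ i, f i * g i) ^ 2) := (Real.sqrt_sq_eq_abs _).symm
    _ ≤ Real.sqrt ((∑ i, f i ^ 2) * ∑ i, g i ^ 2) := Real.sqrt_le_sqrt h
    _ = euclNorm f * euclNorm g := Real.sqrt_mul (by positivity) _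

lemma euclNorm_eq {k : ℕ} (v : Fin k → ℝ) :
    euclNorm v = ‖(WithLp.equiv 2 (Fin k → ℝ)).symm v‖ := by
  rw [EuclideanSpace.norm_eq]
  simp [euclNorm, Real.norm_eq_abs, sq_abs]

lemma mulVec_euclNorm_le {m n : ℕ} (M : Matrix (Fin m) (Fin n) ℝ) (x : Fin n → ℝ) :
    euclNorm (M *ᵥ x) ≤ opNorm M * euclNorm x := by
  have h := (LinearMap.toContinuousLinearMap (Matrix.toEuclideanLin M)).le_opNorm
      ((WithLp.equiv 2 (Fin n → ℝ)).symm x)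
  rw [euclNorm_eq, euclNorm_eq]
  simpa [opNorm] using h

lemma trace_pair_le {n p : ℕ} (M Δ : Matrix (Fin n) (Fin p) ℝ) :
    ∑ a, ∑ b, M a b * Δ a b ≤ opNorm M * Real.sqrt Δ.rank * frobNorm Δ := by
  classical
  have hH : (Δᴴ * Δ).IsHermitian := isHermitian_conjTranspose_mul_self Δ
  set lam := hH.eigenvalues with hlam
  set U : Matrix (Fin p) (Fin p) ℝ := (hH.eigenvectorUnitary : Matrix (Fin p) (Fin p) ℝ) with hU
  set v : Fin p → (Fin p → ℝ) := fun i => ⇑(hH.eigenvectorBasis i) with hv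
  have hUapply : ∀ a i, U a i = v i a := fun a i => rfl
  have hUU : U * star U = 1 := Matrix.mem_unitaryGroup_iff.mp (Matrix.IsHermitian.eigenvectorUnitary hH).2
  have hUU' : star U * U = 1 := Matrix.mem_unitaryGroup_iff'.mp (Matrix.IsHermitian.eigenvectorUnitary hH).2
  -- orthonormality of eigenvectors
  have F1 : ∀ i j, ∑ a, v i a * v j a = if i = j then 1 else 0 := by
    intro i j
    have := congrFun (congrFun hUU' i) j
    simpa [Matrix.mul_apply, Matrix.one_apply, Matrix.star_apply, hUapply] using this
  -- completeness
  have F2 : ∀ a b, ∑ i, v i a * v i b = if a = b then 1 else 0 := by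
    intro a b
    have := congrFun (congrFun hUU a) b
    simpa [Matrix.mul_apply, Matrix.one_apply, Matrix.star_apply, hUapply] using this
  have F3 : ∀ k, (Δᴴ * Δ) *ᵥ v k = lam k • v k := fun k => hH.mulVec_eigenvectorBasis k
  have hlam0 : ∀ k, 0 ≤ lam k := fun k => Matrix.eigenvalues_conjTranspose_mul_self_nonneg Δ k
  -- ‖Δ v_k‖² = λ_k
  have F4 : ∀ k, ∑ a, (Δ *ᵥ v k) a ^ 2 = lam k := by
    intro k
    have h1 : ∑ a, (Δ *ᵥ v k) a ^ 2 = (Δ *ᵥ v k) ⬝ᵥ (Δ *ᵥ v k) := by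
      simp [dotProduct, pow_two]
    have h2 : v k ⬝ᵥ ((Δᴴ * Δ) *ᵥ v k) = (Δ *ᵥ v k) ⬝ᵥ (Δ *ᵥ v k) := by
      rw [← Matrix.mulVec_mulVec, Matrix.dotProduct_mulVec,
        Matrix.conjTranspose_eq_transpose_of_trivial, Matrix.vecMul_transpose]
    rw [h1, ← h2, F3 k, dotProduct_smul]
    have := F1 k k
    simp only [if_pos rfl] at this
    simp [dotProduct, smul_eq_mul]
    rw [show ∑ a, v k a * v k a = 1 from this, mul_one]
  -- expansion of the Frobenius pairing along the eigenbasis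
  have F5 : ∑ a, ∑ b, M a b * Δ a b = ∑ k, ∑ a, (M *ᵥ v k) a * (Δ *ᵥ v k) a := by
    have h1 : ∀ k a, (M *ᵥ v k) a * (Δ *ᵥ v k) a
        = ∑ b, ∑ c, M a b * Δ a c * (v k b * v k c) := by
      intro k a
      rw [Matrix.mulVec, Matrix.mulVec, dotProduct, dotProduct,
        Finset.sum_mul_sum]
      exact Finset.sum_congr rfl fun b _ => Finset.sum_congr rfl fun c _ => by ring
    symm
    calc ∑ k, ∑ a, (M *ᵥ v k) a * (Δ *ᵥ v k) a
        = ∑ k, ∑ a, ∑ b, ∑ c, M a b * Δ a c * (v k b * v k c) := by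
          exact Finset.sum_congr rfl fun k _ => Finset.sum_congr rfl fun a _ => h1 k a
      _ = ∑ a, ∑ k, ∑ b, ∑ c, M a b * Δ a c * (v k b * v k c) := Finset.sum_comm
      _ = ∑ a, ∑ b, ∑ k, ∑ c, M a b * Δ a c * (v k b * v k c) :=
          Finset.sum_congr rfl fun a _ => Finset.sum_comm
      _ = ∑ a, ∑ b, ∑ c, ∑ k, M a b * Δ a c * (v k b * v k c) :=
          Finset.sum_congr rfl fun a _ => Finset.sum_congr rfl fun b _ => Finset.sum_comm
      _ = ∑ a, ∑ b, ∑ c, M a b * Δ a c * (if b = c then 1 else 0) := by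
          refine Finset.sum_congr rfl fun a _ => Finset.sum_congr rfl fun b _ =>
            Finset.sum_congr rfl fun c _ => ?_
          rw [← Finset.mul_sum, F2 b c]
      _ = ∑ a, ∑ b, M a b * Δ a b := by
          refine Finset.sum_congr rfl fun a _ => Finset.sum_congr rfl fun b _ => ?_
          simp [mul_ite, Finset.sum_ite_eq]
  -- sum of eigenvalues = Frobenius norm squared
  have F6 : ∑ k, lam k = ∑ a, ∑ b, Δ a b ^ 2 := by
    have hst := hH.spectral_theorem
    have htr : (Δᴴ * Δ).trace = ∑ k, lam k := by
      conv_lhs => rw [hst]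
      rw [Unitary.conjStarAlgAut_apply]
      rw [Matrix.trace_mul_comm, ← Matrix.mul_assoc, hUU', Matrix.one_mul]
      simp [Matrix.trace_diagonal]
      rfl
    have htr2 : (Δᴴ * Δ).trace = ∑ a, ∑ b, Δ a b ^ 2 := by
      rw [Matrix.trace]
      simp only [Matrix.diag_apply, Matrix.mul_apply, Matrix.conjTranspose_apply, star_trivial]
      rw [Finset.sum_comm]
      exact Finset.sum_congr rfl fun a _ => Finset.sum_congr rfl fun b _ => (pow_two _).symm
    rw [← htr, htr2]
  -- rank counts nonzero eigenvalues
  set s : Finset (Fin p) := Finset.univ.filter (fun k => lam k ≠ 0) with hs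
  have F7 : (s.card : ℝ) = (Δ.rank : ℝ) := by
    have h1 : (Δᴴ * Δ).rank = Fintype.card {i // lam i ≠ 0} := hH.rank_eq_card_non_zero_eigs
    have h2 : (Δᴴ * Δ).rank = Δ.rank := by
      rw [Matrix.conjTranspose_eq_transpose_of_trivial, Matrix.rank_transpose_mul_self]
    rw [← h2, h1, Fintype.card_subtype]
  -- sum of singular values ≤ sqrt(rank) * frobNorm
  have F8 : ∑ k, Real.sqrt (lam k) ≤ Real.sqrt Δ.rank * frobNorm Δ := by
    have hzero : ∀ k ∈ Finset.univ \ s, Real.sqrt (lam k) = 0 := by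
      intro k hk
      simp only [hs, Finset.mem_sdiff, Finset.mem_filter, Finset.mem_univ, true_and,
        not_not] at hk
      rw [hk, Real.sqrt_zero]
    have hsub : ∑ k, Real.sqrt (lam k) = ∑ k ∈ s, Real.sqrt (lam k) := by
      rw [← Finset.sum_subset (Finset.subset_univ s)]
      intro k _ hk
      exact hzero k (Finset.mem_sdiff.mpr ⟨Finset.mem_univ k, hk⟩)
    have hcs : (∑ k ∈ s, Real.sqrt (lam k)) ^ 2 ≤ s.card * ∑ k ∈ s, lam k := by
      have := sq_sum_le_card_mul_sum_sq (s := s) (f := fun k => Real.sqrt (lam k))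
      simpa [Real.sq_sqrt, hlam0] using this
    have hsum_le : ∑ k ∈ s, lam k ≤ ∑ k, lam k :=
      Finset.sum_le_sum_of_subset_of_nonneg (Finset.subset_univ s)
        (fun k _ _ => hlam0 k)
    have hfrob : frobNorm Δ ^ 2 = ∑ a, ∑ b, Δ a b ^ 2 := by
      rw [frobNorm, Real.sq_sqrt]
      positivity
    have hS : (∑ k ∈ s, Real.sqrt (lam k)) ^ 2 ≤ (Δ.rank : ℝ) * frobNorm Δ ^ 2 := by
      calc (∑ k ∈ s, Real.sqrt (lam k)) ^ 2 ≤ s.card * ∑ k ∈ s, lam k := hcs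
        _ ≤ s.card * ∑ k, lam k := by
            apply mul_le_mul_of_nonneg_left hsum_le (by positivity)
        _ = (Δ.rank : ℝ) * frobNorm Δ ^ 2 := by rw [F7, F6, hfrob]
    have hnn : 0 ≤ ∑ k ∈ s, Real.sqrt (lam k) :=
      Finset.sum_nonneg fun k _ => Real.sqrt_nonneg _
    rw [hsub]
    calc ∑ k ∈ s, Real.sqrt (lam k)
        = Real.sqrt ((∑ k ∈ s, Real.sqrt (lam k)) ^ 2) := (Real.sqrt_sq hnn).symm
      _ ≤ Real.sqrt ((Δ.rank : ℝ) * frobNorm Δ ^ 2) := Real.sqrt_le_sqrt hS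
      _ = Real.sqrt Δ.rank * frobNorm Δ := by
          rw [Real.sqrt_mul (by positivity), Real.sqrt_sq (show (0:ℝ) ≤ frobNorm Δ from Real.sqrt_nonneg _)]
  have hop : (0 : ℝ) ≤ opNorm M := norm_nonneg _
  calc ∑ a, ∑ b, M a b * Δ a b = ∑ k, ∑ a, (M *ᵥ v k) a * (Δ *ᵥ v k) a := F5
    _ ≤ ∑ k, opNorm M * Real.sqrt (lam k) := by
        refine Finset.sum_le_sum fun k _ => ?_
        have h1 := cs_sum (M *ᵥ v k) (Δ *ᵥ v k)
        have h2 := mulVec_euclNorm_le M (v k)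
        have h3 : euclNorm (v k) = 1 := by
          rw [euclNorm]
          have h := F1 k k
          simp only [if_pos rfl] at h
          rw [show ∑ a, v k a ^ 2 = 1 by simpa [pow_two] using h, Real.sqrt_one]
        have h4 : euclNorm (Δ *ᵥ v k) = Real.sqrt (lam k) := by rw [euclNorm, F4]
        rw [h3, mul_one] at h2
        calc ∑ a, (M *ᵥ v k) a * (Δ *ᵥ v k) a
            ≤ euclNorm (M *ᵥ v k) * euclNorm (Δ *ᵥ v k) := h1
          _ ≤ opNorm M * Real.sqrt (lam k) := by
              rw [h4]
              exact mul_le_mul_of_nonneg_right h2 (Real.sqrt_nonneg _)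
    _ = opNorm M * ∑ k, Real.sqrt (lam k) := (Finset.mul_sum _ _ _).symm
    _ ≤ opNorm M * (Real.sqrt Δ.rank * frobNorm Δ) := mul_le_mul_of_nonneg_left F8 hop
    _ = opNorm M * Real.sqrt Δ.rank * frobNorm Δ := (mul_assoc _ _ _).symm

lemma matrix_rank_sub_le {n p : ℕ} (A B : Matrix (Fin n) (Fin p) ℝ) :
    (A - B).rank ≤ A.rank + B.rank := by
  have hr : LinearMap.range (A - B).mulVecLin ≤
      LinearMap.range A.mulVecLin ⊔ LinearMap.range B.mulVecLin := by
    rintro x ⟨y, rfl⟩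
    have : (A - B).mulVecLin y = A.mulVecLin y - B.mulVecLin y := by
      simp [Matrix.mulVecLin_apply, Matrix.sub_mulVec]
    rw [this]
    exact Submodule.sub_mem _ (Submodule.mem_sup_left ⟨y, rfl⟩)
      (Submodule.mem_sup_right ⟨y, rfl⟩)
  calc (A - B).rank ≤ Module.finrank ℝ
        ↥(LinearMap.range A.mulVecLin ⊔ LinearMap.range B.mulVecLin) :=
        Submodule.finrank_mono hr
    _ ≤ A.rank + B.rank := Submodule.finrank_add_le_finrank_add_finrank _ _

/-- deterministic core of Theorem 3.1, bounding the estimation error of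
the joint maximum likelihood estimate of the natural parameter matrix. -/
theorem stmt5 {n p d r : ℕ} (R : Set ℝ) (hRopen : IsOpen R) (hRconv : Convex ℝ R)
    (A A' A'' : ℝ → ℝ)
    (hA' : ∀ θ ∈ R, HasDerivAt A (A' θ) θ)
    (hA'' : ∀ θ ∈ R, HasDerivAt A' (A'' θ) θ)
    (κ₁ : ℝ) (hκ₁ : 0 < κ₁) (hκ₁le : ∀ θ ∈ R, κ₁ ≤ A'' θ)
    (Y Θh Θs : Matrix (Fin n) (Fin p) ℝ)
    (hΘh : ∀ i j, Θh i j ∈ R) (hΘs : ∀ i j, Θs i j ∈ R)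
    (hrankh : Θh.rank ≤ d + r) (hranks : Θs.rank ≤ d + r)
    (hL : negLogLik A Y Θh ≤ negLogLik A Y Θs) :
    frobNorm (Θh - Θs) ≤
      (2 * Real.sqrt (2 * (d + r)) / κ₁) *
        opNorm (Y - Matrix.of fun i j => A' (Θs i j)) := by
  set Δ : Matrix (Fin n) (Fin p) ℝ := Θh - Θs with hΔ
  set M : Matrix (Fin n) (Fin p) ℝ := Y - Matrix.of (fun i j => A' (Θs i j)) with hM
  have hΔapp : ∀ i j, Δ i j = Θh i j - Θs i j := fun i j => rfl
  have hMapp : ∀ i j, M i j = Y i j - A' (Θs i j) := fun i j => rfl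
  have hop : (0 : ℝ) ≤ opNorm M := norm_nonneg _
  have hfnn : (0 : ℝ) ≤ frobNorm Δ := Real.sqrt_nonneg _
  have hsq2 : (0 : ℝ) ≤ Real.sqrt (2 * (d + r)) := Real.sqrt_nonneg _
  have hRHS : (0 : ℝ) ≤ (2 * Real.sqrt (2 * (d + r)) / κ₁) * opNorm M :=
    mul_nonneg (div_nonneg (by positivity) hκ₁.le) hop
  rcases Nat.eq_zero_or_pos n with hn | hn
  · subst hn
    have h0 : frobNorm Δ = 0 := by
      rw [frobNorm]
      simp
    rw [h0]
    exact hRHS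
  -- unscaled likelihood inequality
  have hL' : -(Yᵀ * Θh).trace + ∑ i, ∑ j, A (Θh i j)
      ≤ -(Yᵀ * Θs).trace + ∑ i, ∑ j, A (Θs i j) := by
    rw [negLogLik, negLogLik] at hL
    have hpos : (0 : ℝ) < 1 / n := by positivity
    exact (mul_le_mul_iff_right₀ hpos).mp hL
  -- trace expansion
  have htr : ∀ Θ : Matrix (Fin n) (Fin p) ℝ,
      (Yᵀ * Θ).trace = ∑ i, ∑ j, Y i j * Θ i j := by
    intro Θ
    rw [Matrix.trace]
    simp only [Matrix.diag_apply, Matrix.mul_apply, Matrix.transpose_apply]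
    exact Finset.sum_comm
  -- Taylor lower bound entrywise
  have hT : ∀ i j, A (Θs i j) + A' (Θs i j) * Δ i j + κ₁ / 2 * Δ i j ^ 2 ≤ A (Θh i j) := by
    intro i j
    rw [hΔapp]
    exact taylor_lb R hRopen hRconv A A' A'' hA' hA'' κ₁ hκ₁le (hΘs i j) (hΘh i j)
  have hTsum : ∑ i, ∑ j, (A (Θs i j) + A' (Θs i j) * Δ i j + κ₁ / 2 * Δ i j ^ 2)
      ≤ ∑ i, ∑ j, A (Θh i j) :=
    Finset.sum_le_sum fun i _ => Finset.sum_le_sum fun j _ => hT i j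
  have hsplit : ∑ i, ∑ j, (A (Θs i j) + A' (Θs i j) * Δ i j + κ₁ / 2 * Δ i j ^ 2)
      = (∑ i, ∑ j, A (Θs i j)) + (∑ i, ∑ j, A' (Θs i j) * Δ i j)
        + κ₁ / 2 * ∑ i, ∑ j, Δ i j ^ 2 := by
    rw [Finset.mul_sum]
    simp_rw [Finset.mul_sum, ← Finset.sum_add_distrib]
  have hYsum : ∑ i, ∑ j, Y i j * Δ i j
      = (∑ i, ∑ j, Y i j * Θh i j) - ∑ i, ∑ j, Y i j * Θs i j := by
    simp_rw [hΔapp, mul_sub, ← Finset.sum_sub_distrib]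
  have hMsum : ∑ i, ∑ j, M i j * Δ i j
      = (∑ i, ∑ j, Y i j * Δ i j) - ∑ i, ∑ j, A' (Θs i j) * Δ i j := by
    simp_rw [hMapp, sub_mul, ← Finset.sum_sub_distrib]
  have hkey : κ₁ / 2 * ∑ i, ∑ j, Δ i j ^ 2 ≤ ∑ i, ∑ j, M i j * Δ i j := by
    rw [htr Θh, htr Θs] at hL'
    rw [hMsum, hYsum]
    linarith [hTsum, hsplit]
  -- rank bound
  have hrank : Real.sqrt (Δ.rank) ≤ Real.sqrt (2 * (d + r)) := by
    apply Real.sqrt_le_sqrt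
    have h1 : Δ.rank ≤ (d + r) + (d + r) :=
      (matrix_rank_sub_le Θh Θs).trans (add_le_add hrankh hranks)
    have h2 : (Δ.rank : ℝ) ≤ (((d + r) + (d + r) : ℕ) : ℝ) := Nat.cast_le.mpr h1
    push_cast at h2 ⊢
    linarith
  have hfrobsq : frobNorm Δ ^ 2 = ∑ i, ∑ j, Δ i j ^ 2 := by
    rw [frobNorm, Real.sq_sqrt]
    positivity
  have hfin : κ₁ / 2 * frobNorm Δ ^ 2
      ≤ opNorm M * Real.sqrt (2 * (d + r)) * frobNorm Δ := by
    calc κ₁ / 2 * frobNorm Δ ^ 2 = κ₁ / 2 * ∑ i, ∑ j, Δ i j ^ 2 := by rw [hfrobsq]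
      _ ≤ ∑ i, ∑ j, M i j * Δ i j := hkey
      _ ≤ opNorm M * Real.sqrt (Δ.rank) * frobNorm Δ := trace_pair_le M Δ
      _ ≤ opNorm M * Real.sqrt (2 * (d + r)) * frobNorm Δ :=
          mul_le_mul_of_nonneg_right (mul_le_mul_of_nonneg_left hrank hop) hfnn
  rcases eq_or_lt_of_le hfnn with hf0 | hf
  · rw [← hf0]
    exact hRHS
  · have hstep : κ₁ / 2 * frobNorm Δ ≤ opNorm M * Real.sqrt (2 * (d + r)) := by
      have h2 : κ₁ / 2 * frobNorm Δ * frobNorm Δ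
          ≤ opNorm M * Real.sqrt (2 * (d + r)) * frobNorm Δ := by
        nlinarith [hfin]
      exact le_of_mul_le_mul_right h2 hf
    rw [div_mul_eq_mul_div, le_div_iff₀ hκ₁]
    nlinarith [hstep]
end

section
/- Let R ⊆ ℝ be an open interval and A : ℝ → ℝ be twice differentiable on R with A''(θ) ≤ κ₂ < ∞ for all θ ∈ R. Let Y, Θ₁, Θ₂ ∈ ℝ^{n×p} with all entries of Θ₁ and Θ₂ in R, and let r₁ = rank(Θ₁), r₂ = rank(Θ₂). Then L(Θ₂) − L(Θ₁) ≤ (√(r₁+r₂)/n) · ‖Y − A'(Θ₁)‖_op · ‖Θ₁ − Θ₂‖_F + (κ₂/(2n)) · ‖Θ₁ − Θ₂‖_F². (Second inequality of Lemma B.1.) -/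
open Matrix MeasureTheory
open scoped BigOperators ENNReal

/- ======================  Auxiliary lemmas  ====================== -/

/-- Second-order Taylor upper bound from an upper bound on the second derivative,
via convexity of `κ₂ t²/2 − A t`. -/
lemma stmt7_taylor_upper (R : Set ℝ) (hRopen : IsOpen R) (hRconv : Convex ℝ R)
    (A A' A'' : ℝ → ℝ)
    (hA' : ∀ θ ∈ R, HasDerivAt A (A' θ) θ)
    (hA'' : ∀ θ ∈ R, HasDerivAt A' (A'' θ) θ)
    (κ₂ : ℝ) (hκ₂le : ∀ θ ∈ R, A'' θ ≤ κ₂)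
    {x y : ℝ} (hx : x ∈ R) (hy : y ∈ R) :
    A y - A x - A' x * (y - x) ≤ κ₂ / 2 * (y - x) ^ 2 := by
  set B : ℝ → ℝ := fun t => κ₂ / 2 * t ^ 2 - A t with hB
  have hBderiv : ∀ t ∈ R, HasDerivAt B (κ₂ * t - A' t) t := by
    intro t ht
    have h1 : HasDerivAt (fun t : ℝ => κ₂ / 2 * t ^ 2) (κ₂ / 2 * (2 * t)) t := by
      simpa using ((hasDerivAt_pow 2 t).const_mul (κ₂ / 2))
    have := h1.sub (hA' t ht)
    exact this.congr_deriv (by ring)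
  have hB'deriv : ∀ t ∈ R, HasDerivAt (fun t => κ₂ * t - A' t) (κ₂ - A'' t) t := by
    intro t ht
    exact (show HasDerivAt (fun t => κ₂ * t) κ₂ t by simpa using (hasDerivAt_id t).const_mul κ₂).sub (hA'' t ht)
  have hconv : ConvexOn ℝ R B := by
    apply convexOn_of_hasDerivWithinAt2_nonneg hRconv
      (fun t ht => ((hBderiv t ht).continuousAt).continuousWithinAt)
      (f' := fun t => κ₂ * t - A' t) (f'' := fun t => κ₂ - A'' t)
    · intro t ht
      rw [hRopen.interior_eq] at ht
      exact (hBderiv t ht).hasDerivWithinAt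
    · intro t ht
      rw [hRopen.interior_eq] at ht
      exact (hB'deriv t ht).hasDerivWithinAt
    · intro t ht
      rw [hRopen.interior_eq] at ht
      linarith [hκ₂le t ht]
  have key : (κ₂ * x - A' x) * (y - x) ≤ B y - B x := by
    rcases lt_trichotomy x y with h | h | h
    · have := hconv.le_slope_of_hasDerivAt hx hy h (hBderiv x hx)
      rw [slope_def_field] at this
      have h0 : (0:ℝ) < y - x := by linarith
      calc (κ₂ * x - A' x) * (y - x) ≤ (B y - B x) / (y - x) * (y - x) := by
            exact mul_le_mul_of_nonneg_right this h0.le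
        _ = B y - B x := by field_simp
    · simp [h]
    · have := hconv.slope_le_of_hasDerivAt hy hx h (hBderiv x hx)
      rw [slope_def_field] at this
      have h0 : (0:ℝ) < x - y := by linarith
      have : (B x - B y) / (x - y) * (x - y) ≤ (κ₂ * x - A' x) * (x - y) :=
        mul_le_mul_of_nonneg_right this h0.le
      rw [div_mul_cancel₀] at this
      · nlinarith
      · exact h0.ne'
  simp only [hB] at key
  nlinarith [key]

lemma stmt7_opNorm_bound {m n : ℕ} (M : Matrix (Fin m) (Fin n) ℝ)
    (v : EuclideanSpace ℝ (Fin n)) :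
    ‖Matrix.toEuclideanLin M v‖ ≤ opNorm M * ‖v‖ := by
  simpa [opNorm] using (LinearMap.toContinuousLinearMap (Matrix.toEuclideanLin M)).le_opNorm v

lemma stmt7_opNorm_neg {m n : ℕ} (M : Matrix (Fin m) (Fin n) ℝ) :
    opNorm (-M) = opNorm M := by
  unfold opNorm
  rw [map_neg, map_neg, norm_neg]

lemma stmt7_transpose_norm_le {m n : ℕ} (M : Matrix (Fin m) (Fin n) ℝ)
    (u : EuclideanSpace ℝ (Fin m)) (hu : ‖u‖ = 1) :
    ‖Matrix.toEuclideanLin Mᵀ u‖ ≤ opNorm M := by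
  set w := Matrix.toEuclideanLin Mᵀ u with hw
  have hinner : (inner ℝ w w : ℝ) = inner ℝ u (Matrix.toEuclideanLin M w) := by
    rw [hw]
    simp only [PiLp.inner_apply, RCLike.inner_apply, conj_trivial,
      Matrix.toEuclideanLin_apply]
    show (Mᵀ *ᵥ u.ofLp) ⬝ᵥ (Mᵀ *ᵥ u.ofLp) = (M *ᵥ (Mᵀ *ᵥ u.ofLp)) ⬝ᵥ u.ofLp
    rw [dotProduct_comm (M *ᵥ _), Matrix.mulVec_transpose, Matrix.dotProduct_mulVec]
  have h2 : ‖w‖ ^ 2 ≤ opNorm M * ‖w‖ := by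
    rw [← real_inner_self_eq_norm_sq, hinner]
    calc (inner ℝ u (Matrix.toEuclideanLin M w) : ℝ)
        ≤ ‖u‖ * ‖Matrix.toEuclideanLin M w‖ := real_inner_le_norm _ _
      _ = ‖Matrix.toEuclideanLin M w‖ := by rw [hu, one_mul]
      _ ≤ opNorm M * ‖w‖ := stmt7_opNorm_bound M w
  rcases eq_or_lt_of_le (norm_nonneg w) with h0 | h0
  · have : (0:ℝ) ≤ opNorm M := norm_nonneg _
    linarith [h0]
  · nlinarith

lemma stmt7_transpose_apply_sq_sum {n p : ℕ} (M : Matrix (Fin n) (Fin p) ℝ)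
    (u : EuclideanSpace ℝ (Fin n)) :
    ‖Matrix.toEuclideanLin Mᵀ u‖ ^ 2
      = ∑ j, (inner ℝ ((WithLp.equiv 2 (Fin n → ℝ)).symm (fun i => M i j)) u : ℝ) ^ 2 := by
  rw [EuclideanSpace.norm_eq, Real.sq_sqrt (by positivity)]
  refine Finset.sum_congr rfl fun j _ => ?_
  have hj : ((Matrix.toEuclideanLin Mᵀ) u) j
      = (inner ℝ ((WithLp.equiv 2 (Fin n → ℝ)).symm (fun i => M i j)) u : ℝ) := by
    show (Mᵀ *ᵥ _) j = _
    simp [Matrix.mulVec, dotProduct, PiLp.inner_apply, RCLike.inner_apply,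
      Matrix.transpose_apply, mul_comm]
  rw [Real.norm_eq_abs, sq_abs, hj]

/-- Key trace inequality: `⟨M, Δ⟩ ≤ √(rank Δ) ‖M‖_op ‖Δ‖_F`. -/
lemma stmt7_trace_rank_bound {n p : ℕ} (M Δ : Matrix (Fin n) (Fin p) ℝ) :
    ∑ i, ∑ j, M i j * Δ i j ≤ Real.sqrt (Δ.rank : ℝ) * opNorm M * frobNorm Δ := by
  classical
  set S : Submodule ℝ (EuclideanSpace ℝ (Fin n)) := LinearMap.range (Matrix.toEuclideanLin Δ)
    with hS
  have hrank : Δ.rank = Module.finrank ℝ S := by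
    have := Matrix.rank_eq_finrank_range_toLin Δ
      (PiLp.basisFun 2 ℝ (Fin n)) (PiLp.basisFun 2 ℝ (Fin p))
    rw [this]
    rfl
  set r := Module.finrank ℝ S with hr
  set b := stdOrthonormalBasis ℝ S with hb
  set d : Fin p → EuclideanSpace ℝ (Fin n) :=
    fun j => (WithLp.equiv 2 (Fin n → ℝ)).symm (fun i => Δ i j) with hd
  set mc : Fin p → EuclideanSpace ℝ (Fin n) :=
    fun j => (WithLp.equiv 2 (Fin n → ℝ)).symm (fun i => M i j) with hmc
  have hdmem : ∀ j, d j ∈ S := by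
    intro j
    refine ⟨(WithLp.equiv 2 (Fin p → ℝ)).symm (Pi.single j 1), ?_⟩
    simp [Matrix.toEuclideanLin_apply, hd]
    rfl
  set s' : Fin p → S := fun j => ⟨d j, hdmem j⟩ with hs'
  have hexp : ∀ j, (inner ℝ (mc j) (d j) : ℝ)
      = ∑ k, (inner ℝ ((b k : (EuclideanSpace ℝ (Fin n)))) (d j) : ℝ)
          * (inner ℝ (mc j) ((b k : (EuclideanSpace ℝ (Fin n)))) : ℝ) := by
    intro j
    have hrepr : d j = ∑ k, (inner ℝ ((b k : (EuclideanSpace ℝ (Fin n)))) (d j) : ℝ)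
        • (b k : (EuclideanSpace ℝ (Fin n))) := by
      have h1 : ∑ k, (inner ℝ (b k) (s' j) : ℝ) • b k = s' j := b.sum_repr' (s' j)
      have h2 := congrArg (Submodule.subtype S) h1
      simp only [map_sum, Submodule.coe_subtype] at h2
      refine h2.symm.trans (Finset.sum_congr rfl fun k _ => ?_)
      rw [Submodule.coe_smul]
      congr 1
    calc (inner ℝ (mc j) (d j) : ℝ)
        = inner ℝ (mc j) (∑ k, (inner ℝ ((b k : (EuclideanSpace ℝ (Fin n)))) (d j) : ℝ)
            • (b k : (EuclideanSpace ℝ (Fin n)))) := by rw [← hrepr]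
      _ = ∑ k, (inner ℝ ((b k : (EuclideanSpace ℝ (Fin n)))) (d j) : ℝ)
            * (inner ℝ (mc j) ((b k : (EuclideanSpace ℝ (Fin n)))) : ℝ) := by
          rw [inner_sum]
          exact Finset.sum_congr rfl fun k _ => by rw [real_inner_smul_right]
  have hpars : ∀ j, ∑ k, (inner ℝ ((b k : (EuclideanSpace ℝ (Fin n)))) (d j) : ℝ) ^ 2
      = ∑ i, Δ i j ^ 2 := by
    intro j
    have h1 := b.sum_inner_mul_inner (s' j) (s' j)
    have h2 : ∀ k, (inner ℝ (s' j) (b k) : ℝ) * (inner ℝ (b k) (s' j) : ℝ)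
        = (inner ℝ ((b k : (EuclideanSpace ℝ (Fin n)))) (d j) : ℝ) ^ 2 := by
      intro k
      have hco : (inner ℝ (b k) (s' j) : ℝ)
          = inner ℝ ((b k : (EuclideanSpace ℝ (Fin n)))) (d j) := rfl
      have hco2 : (inner ℝ (s' j) (b k) : ℝ)
          = inner ℝ ((b k : (EuclideanSpace ℝ (Fin n)))) (d j) := by
        rw [real_inner_comm]; exact hco
      rw [hco2, hco, ← sq]
    rw [Finset.sum_congr rfl (fun k _ => h2 k)] at h1
    rw [h1]
    have : (inner ℝ (s' j) (s' j) : ℝ) = inner ℝ (d j) (d j) := rfl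
    rw [this]
    simp only [PiLp.inner_apply, RCLike.inner_apply, conj_trivial,
      hd, sq]
    rfl
  have hcolbound : ∀ k, ∑ j, (inner ℝ (mc j) ((b k : (EuclideanSpace ℝ (Fin n)))) : ℝ) ^ 2
      ≤ opNorm M ^ 2 := by
    intro k
    have hnorm1 : ‖((b k : (EuclideanSpace ℝ (Fin n))))‖ = 1 := by
      exact b.orthonormal.1 k
    have hle := stmt7_transpose_norm_le M ((b k : (EuclideanSpace ℝ (Fin n)))) hnorm1
    have hsq : ‖Matrix.toEuclideanLin Mᵀ ((b k : (EuclideanSpace ℝ (Fin n))))‖ ^ 2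
        = ∑ j, (inner ℝ (mc j) ((b k : (EuclideanSpace ℝ (Fin n)))) : ℝ) ^ 2 := by
      rw [hmc]
      exact stmt7_transpose_apply_sq_sum M _
    calc ∑ j, (inner ℝ (mc j) ((b k : (EuclideanSpace ℝ (Fin n)))) : ℝ) ^ 2
        = ‖Matrix.toEuclideanLin Mᵀ ((b k : (EuclideanSpace ℝ (Fin n))))‖ ^ 2 := hsq.symm
      _ ≤ opNorm M ^ 2 := by
          have h0 : (0:ℝ) ≤ ‖Matrix.toEuclideanLin Mᵀ ((b k : (EuclideanSpace ℝ (Fin n))))‖ :=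
            norm_nonneg _
          nlinarith
  set F : Fin p × Fin r → ℝ :=
    fun x => (inner ℝ ((b x.2 : (EuclideanSpace ℝ (Fin n)))) (d x.1) : ℝ) with hF
  set G : Fin p × Fin r → ℝ :=
    fun x => (inner ℝ (mc x.1) ((b x.2 : (EuclideanSpace ℝ (Fin n)))) : ℝ) with hG
  have hT : ∑ i, ∑ j, M i j * Δ i j = ∑ x : Fin p × Fin r, F x * G x := by
    rw [Finset.sum_comm]
    rw [← Finset.univ_product_univ, Finset.sum_product]
    refine Finset.sum_congr rfl fun j _ => ?_
    rw [← hexp j]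
    simp [PiLp.inner_apply, hmc, hd, mul_comm]
  have hFsq : ∑ x : Fin p × Fin r, F x ^ 2 = ∑ i, ∑ j, Δ i j ^ 2 := by
    rw [← Finset.univ_product_univ, Finset.sum_product]
    rw [Finset.sum_congr rfl fun j (_ : j ∈ Finset.univ) => hpars j]
    exact Finset.sum_comm
  have hGsq : ∑ x : Fin p × Fin r, G x ^ 2 ≤ (r : ℝ) * opNorm M ^ 2 := by
    rw [← Finset.univ_product_univ, Finset.sum_product, Finset.sum_comm]
    calc ∑ k : Fin r, ∑ j, G (j, k) ^ 2 ≤ ∑ _k : Fin r, opNorm M ^ 2 :=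
          Finset.sum_le_sum fun k _ => hcolbound k
      _ = (r : ℝ) * opNorm M ^ 2 := by simp [mul_comm]
  have hcs := Finset.sum_mul_sq_le_sq_mul_sq Finset.univ F G
  have hfrob : Real.sqrt (∑ x : Fin p × Fin r, F x ^ 2) = frobNorm Δ := by
    rw [hFsq]; rfl
  have hFnonneg : (0:ℝ) ≤ ∑ x : Fin p × Fin r, F x ^ 2 :=
    Finset.sum_nonneg fun x _ => sq_nonneg _
  have hGnonneg : (0:ℝ) ≤ ∑ x : Fin p × Fin r, G x ^ 2 :=
    Finset.sum_nonneg fun x _ => sq_nonneg _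
  have hT2 : ∑ x : Fin p × Fin r, F x * G x ≤
      Real.sqrt (∑ x : Fin p × Fin r, F x ^ 2) * Real.sqrt (∑ x : Fin p × Fin r, G x ^ 2) := by
    calc ∑ x : Fin p × Fin r, F x * G x ≤ |∑ x : Fin p × Fin r, F x * G x| := le_abs_self _
      _ = Real.sqrt ((∑ x : Fin p × Fin r, F x * G x) ^ 2) := (Real.sqrt_sq_eq_abs _).symm
      _ ≤ Real.sqrt ((∑ x : Fin p × Fin r, F x ^ 2) * ∑ x : Fin p × Fin r, G x ^ 2) :=
          Real.sqrt_le_sqrt hcs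
      _ = _ := Real.sqrt_mul hFnonneg _
  calc ∑ i, ∑ j, M i j * Δ i j = ∑ x : Fin p × Fin r, F x * G x := hT
    _ ≤ Real.sqrt (∑ x : Fin p × Fin r, F x ^ 2) * Real.sqrt (∑ x : Fin p × Fin r, G x ^ 2) := hT2
    _ ≤ frobNorm Δ * Real.sqrt ((r : ℝ) * opNorm M ^ 2) := by
        rw [hfrob]
        exact mul_le_mul_of_nonneg_left (Real.sqrt_le_sqrt hGsq) (Real.sqrt_nonneg _)
    _ = Real.sqrt (Δ.rank : ℝ) * opNorm M * frobNorm Δ := by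
        rw [Real.sqrt_mul (Nat.cast_nonneg r),
          Real.sqrt_sq (show (0:ℝ) ≤ opNorm M from norm_nonneg _), hrank]
        ring

lemma stmt7_rank_sub_le {n p : ℕ} (A B : Matrix (Fin n) (Fin p) ℝ) :
    (B - A).rank ≤ A.rank + B.rank := by
  have h : LinearMap.range (B - A).mulVecLin ≤
      LinearMap.range A.mulVecLin ⊔ LinearMap.range B.mulVecLin := by
    rintro x ⟨v, rfl⟩
    have hx : (B - A).mulVecLin v = B.mulVecLin v - A.mulVecLin v := by
      simp [Matrix.mulVecLin_apply, Matrix.sub_mulVec]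
    rw [hx]
    exact Submodule.sub_mem _ (Submodule.mem_sup_right ⟨v, rfl⟩)
      (Submodule.mem_sup_left ⟨v, rfl⟩)
  calc (B - A).rank ≤ Module.finrank ℝ
        (LinearMap.range A.mulVecLin ⊔ LinearMap.range B.mulVecLin : Submodule ℝ (Fin n → ℝ)) :=
        Submodule.finrank_mono h
    _ ≤ A.rank + B.rank := by
        have := Submodule.finrank_sup_add_finrank_inf_eq
          (LinearMap.range A.mulVecLin) (LinearMap.range B.mulVecLin)
        unfold Matrix.rank
        omega

lemma stmt7_trace_form {n p : ℕ} (Y Θ : Matrix (Fin n) (Fin p) ℝ) :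
    (Yᵀ * Θ).trace = ∑ i, ∑ j, Y i j * Θ i j := by
  simp only [Matrix.trace, Matrix.diag, Matrix.mul_apply, Matrix.transpose_apply]
  exact Finset.sum_comm

/-- second inequality of Lemma B.1 (upper bound on the likelihood
difference, with curvature upper bound `κ₂`). -/
theorem stmt7 {n p : ℕ} (R : Set ℝ) (hRopen : IsOpen R) (hRconv : Convex ℝ R)
    (A A' A'' : ℝ → ℝ)
    (hA' : ∀ θ ∈ R, HasDerivAt A (A' θ) θ)
    (hA'' : ∀ θ ∈ R, HasDerivAt A' (A'' θ) θ)
    (κ₂ : ℝ) (hκ₂le : ∀ θ ∈ R, A'' θ ≤ κ₂)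
    (Y Θ₁ Θ₂ : Matrix (Fin n) (Fin p) ℝ)
    (hΘ₁ : ∀ i j, Θ₁ i j ∈ R) (hΘ₂ : ∀ i j, Θ₂ i j ∈ R) :
    negLogLik A Y Θ₂ - negLogLik A Y Θ₁ ≤
      (Real.sqrt ((Θ₁.rank : ℝ) + (Θ₂.rank : ℝ)) / (n : ℝ)) *
          opNorm (Y - Matrix.of fun i j => A' (Θ₁ i j)) * frobNorm (Θ₁ - Θ₂) +
        (κ₂ / (2 * (n : ℝ))) * frobNorm (Θ₁ - Θ₂) ^ 2 := by
  set Δ : Matrix (Fin n) (Fin p) ℝ := Θ₂ - Θ₁ with hΔ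
  set M' : Matrix (Fin n) (Fin p) ℝ := (Matrix.of fun i j => A' (Θ₁ i j)) - Y with hM'
  have hfrobeq : frobNorm Δ = frobNorm (Θ₁ - Θ₂) := by
    unfold frobNorm
    congr 1
    refine Finset.sum_congr rfl fun i _ => Finset.sum_congr rfl fun j _ => ?_
    simp only [hΔ, Matrix.sub_apply]
    ring
  have hfrobsq : ∑ i, ∑ j, (Δ i j) ^ 2 = frobNorm (Θ₁ - Θ₂) ^ 2 := by
    rw [← hfrobeq]
    unfold frobNorm
    rw [Real.sq_sqrt (by positivity)]
  have hopeq : opNorm M' = opNorm (Y - Matrix.of fun i j => A' (Θ₁ i j)) := by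
    have hMeq : M' = -(Y - Matrix.of fun i j => A' (Θ₁ i j)) := by
      ext i j
      simp [hM']
    rw [hMeq, stmt7_opNorm_neg]
  have hranks : Real.sqrt ((Δ.rank : ℝ)) ≤ Real.sqrt ((Θ₁.rank : ℝ) + (Θ₂.rank : ℝ)) := by
    apply Real.sqrt_le_sqrt
    exact_mod_cast stmt7_rank_sub_le Θ₁ Θ₂
  have hfrobnonneg : (0:ℝ) ≤ frobNorm Δ := Real.sqrt_nonneg _
  have hopnonneg : (0:ℝ) ≤ opNorm M' := norm_nonneg _
  have hcore : (-(Yᵀ * Θ₂).trace + ∑ i, ∑ j, A (Θ₂ i j))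
      - (-(Yᵀ * Θ₁).trace + ∑ i, ∑ j, A (Θ₁ i j))
      ≤ Real.sqrt ((Θ₁.rank : ℝ) + (Θ₂.rank : ℝ)) *
          opNorm (Y - Matrix.of fun i j => A' (Θ₁ i j)) * frobNorm (Θ₁ - Θ₂)
        + κ₂ / 2 * frobNorm (Θ₁ - Θ₂) ^ 2 := by
    have h1 : (-(Yᵀ * Θ₂).trace + ∑ i, ∑ j, A (Θ₂ i j))
        - (-(Yᵀ * Θ₁).trace + ∑ i, ∑ j, A (Θ₁ i j))
        = ∑ i, ∑ j, (A (Θ₂ i j) - A (Θ₁ i j) - Y i j * Δ i j) := by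
      rw [stmt7_trace_form Y Θ₂, stmt7_trace_form Y Θ₁]
      simp only [hΔ, Matrix.sub_apply, Finset.sum_sub_distrib, mul_sub]
      ring
    have h2 : ∑ i, ∑ j, (A (Θ₂ i j) - A (Θ₁ i j) - Y i j * Δ i j)
        ≤ ∑ i, ∑ j, (M' i j * Δ i j + κ₂ / 2 * (Δ i j) ^ 2) := by
      refine Finset.sum_le_sum fun i _ => Finset.sum_le_sum fun j _ => ?_
      have ht := stmt7_taylor_upper R hRopen hRconv A A' A'' hA' hA'' κ₂ hκ₂le
        (hΘ₁ i j) (hΘ₂ i j)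
      simp only [hM', hΔ, Matrix.sub_apply, Matrix.of_apply]
      nlinarith [ht]
    have h3 : ∑ i, ∑ j, (M' i j * Δ i j + κ₂ / 2 * (Δ i j) ^ 2)
        = (∑ i, ∑ j, M' i j * Δ i j) + κ₂ / 2 * ∑ i, ∑ j, (Δ i j) ^ 2 := by
      simp [Finset.sum_add_distrib, Finset.mul_sum]
    have h4 := stmt7_trace_rank_bound M' Δ
    calc (-(Yᵀ * Θ₂).trace + ∑ i, ∑ j, A (Θ₂ i j))
        - (-(Yᵀ * Θ₁).trace + ∑ i, ∑ j, A (Θ₁ i j))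
        = ∑ i, ∑ j, (A (Θ₂ i j) - A (Θ₁ i j) - Y i j * Δ i j) := h1
      _ ≤ ∑ i, ∑ j, (M' i j * Δ i j + κ₂ / 2 * (Δ i j) ^ 2) := h2
      _ = (∑ i, ∑ j, M' i j * Δ i j) + κ₂ / 2 * ∑ i, ∑ j, (Δ i j) ^ 2 := h3
      _ ≤ Real.sqrt (Δ.rank : ℝ) * opNorm M' * frobNorm Δ
            + κ₂ / 2 * ∑ i, ∑ j, (Δ i j) ^ 2 := add_le_add_left h4 _
      _ ≤ Real.sqrt ((Θ₁.rank : ℝ) + (Θ₂.rank : ℝ)) * opNorm M' * frobNorm Δ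
            + κ₂ / 2 * ∑ i, ∑ j, (Δ i j) ^ 2 := by
          gcongr
      _ = Real.sqrt ((Θ₁.rank : ℝ) + (Θ₂.rank : ℝ)) *
            opNorm (Y - Matrix.of fun i j => A' (Θ₁ i j)) * frobNorm (Θ₁ - Θ₂)
            + κ₂ / 2 * frobNorm (Θ₁ - Θ₂) ^ 2 := by
          rw [hopeq, hfrobeq, hfrobsq]
  rcases Nat.eq_zero_or_pos n with hn0 | hnpos
  · subst hn0
    simp [negLogLik]
  · have hnne : (n : ℝ) ≠ 0 := Nat.cast_ne_zero.mpr hnpos.ne'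
    have hninv : (0:ℝ) ≤ 1 / (n : ℝ) := by positivity
    have hmul := mul_le_mul_of_nonneg_left hcore hninv
    unfold negLogLik
    calc (1 / (n : ℝ)) * (-(Yᵀ * Θ₂).trace + ∑ i, ∑ j, A (Θ₂ i j))
          - (1 / (n : ℝ)) * (-(Yᵀ * Θ₁).trace + ∑ i, ∑ j, A (Θ₁ i j))
        = (1 / (n : ℝ)) * ((-(Yᵀ * Θ₂).trace + ∑ i, ∑ j, A (Θ₂ i j))
            - (-(Yᵀ * Θ₁).trace + ∑ i, ∑ j, A (Θ₁ i j))) := by ring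
      _ ≤ (1 / (n : ℝ)) * (Real.sqrt ((Θ₁.rank : ℝ) + (Θ₂.rank : ℝ)) *
            opNorm (Y - Matrix.of fun i j => A' (Θ₁ i j)) * frobNorm (Θ₁ - Θ₂)
            + κ₂ / 2 * frobNorm (Θ₁ - Θ₂) ^ 2) := hmul
      _ = (Real.sqrt ((Θ₁.rank : ℝ) + (Θ₂.rank : ℝ)) / (n : ℝ)) *
            opNorm (Y - Matrix.of fun i j => A' (Θ₁ i j)) * frobNorm (Θ₁ - Θ₂) +
            (κ₂ / (2 * (n : ℝ))) * frobNorm (Θ₁ - Θ₂) ^ 2 := by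
          field_simp
end

section
/- Let W ∈ ℝ^{n×r} and G ∈ ℝ^{p×r} be matrices all of whose rows have Euclidean norm at most C, and suppose W Gᵀ = √(np)·U Σ Vᵀ where U ∈ ℝ^{n×r}, V ∈ ℝ^{p×r} satisfy UᵀU = VᵀV = I_r and Σ ∈ ℝ^{r×r} is diagonal with every diagonal entry at least 1/C_Σ for some C_Σ > 0. Then every row of Γ̂ := √p·V Σ^{1/2} has Euclidean norm at most C² √C_Σ. (Deterministic content of Lemma C.4 on the boundedness of the estimated latent loadings.) -/
open Matrix MeasureTheory
open scoped BigOperators ENNReal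

/-- deterministic content of Lemma C.4: boundedness of the rows of the
estimated latent loadings `Γ̂ = √p · V Σ^{1/2}` when `W Gᵀ = √(np)·U Σ Vᵀ`, the rows of
`W` and `G` have norm at most `C`, and the diagonal entries of `Σ` are at least `1/C_Σ`. -/
theorem stmt14 {n p r : ℕ} (C CS : ℝ) (hCS : 0 < CS)
    (W : Matrix (Fin n) (Fin r) ℝ) (G : Matrix (Fin p) (Fin r) ℝ)
    (hW : ∀ i, euclNorm (W i) ≤ C) (hG : ∀ j, euclNorm (G j) ≤ C)
    (U : Matrix (Fin n) (Fin r) ℝ) (V : Matrix (Fin p) (Fin r) ℝ)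
    (S : Matrix (Fin r) (Fin r) ℝ)
    (hU : Uᵀ * U = 1) (hV : Vᵀ * V = 1)
    (hSdiag : ∀ i j, i ≠ j → S i j = 0)
    (hSlb : ∀ i, 1 / CS ≤ S i i)
    (hsvd : W * Gᵀ = Real.sqrt ((n : ℝ) * p) • (U * S * Vᵀ)) :
    ∀ j : Fin p,
      euclNorm ((Real.sqrt p • (V * Matrix.diagonal fun i => Real.sqrt (S i i))) j) ≤
        C ^ 2 * Real.sqrt CS := by
  intro j
  set s : Fin r → ℝ := fun i => S i i with hsdef
  have hspos : ∀ i, 0 < s i := fun i => lt_of_lt_of_le (by positivity) (hSlb i)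
  -- The row norm squared equals p * ∑ (V j i)^2 * s i
  have hrow : euclNorm ((Real.sqrt p • (V * Matrix.diagonal fun i => Real.sqrt (S i i))) j)
      = Real.sqrt ((p : ℝ) * ∑ i, (V j i) ^ 2 * s i) := by
    unfold euclNorm
    congr 1
    rw [Finset.mul_sum]
    refine Finset.sum_congr rfl fun i _ => ?_
    have h1 : (Real.sqrt p • (V * Matrix.diagonal fun i => Real.sqrt (S i i))) j i
        = Real.sqrt p * (V j i * Real.sqrt (s i)) := by
      simp [Matrix.mul_diagonal, Matrix.smul_apply, hsdef]
    rw [h1, mul_pow, mul_pow, Real.sq_sqrt (Nat.cast_nonneg p),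
      Real.sq_sqrt (hspos i).le]
  rw [hrow]
  rcases Nat.eq_zero_or_pos r with hr | hr
  · subst hr
    simp only [Finset.univ_eq_empty, Finset.sum_empty, mul_zero, Real.sqrt_zero]
    positivity
  rcases Nat.eq_zero_or_pos n with hn | hn
  · exfalso
    subst hn
    have i0 : Fin r := ⟨0, hr⟩
    have := congrFun (congrFun hU i0) i0
    simp [Matrix.mul_apply, Matrix.one_apply] at this
  have i0 : Fin n := ⟨0, hn⟩
  have hC0 : 0 ≤ C := le_trans (Real.sqrt_nonneg _) (hW i0)
  -- orthonormality entrywise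
  have hUU : ∀ k l : Fin r, (∑ i, U i k * U i l) = if k = l then (1:ℝ) else 0 := by
    intro k l
    have := congrFun (congrFun hU k) l
    simpa [Matrix.mul_apply, Matrix.transpose_apply, Matrix.one_apply] using this
  -- key identity
  have key : ∑ i : Fin n, ((W * Gᵀ) i j) ^ 2
      = ((n : ℝ) * p) * ∑ k, (s k) ^ 2 * (V j k) ^ 2 := by
    have h1 : ∀ i, (W * Gᵀ) i j
        = Real.sqrt ((n : ℝ) * p) * ∑ k, U i k * (s k * V j k) := by
      intro i
      have h := congrFun (congrFun hsvd i) j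
      rw [h]
      have hS : S = Matrix.diagonal s := by
        ext k l
        by_cases hkl : k = l
        · subst hkl; simp [Matrix.diagonal, hsdef]
        · simp [Matrix.diagonal, hkl, hSdiag k l hkl]
      simp only [Matrix.smul_apply, smul_eq_mul, hS]
      congr 1
      simp only [Matrix.mul_apply, Matrix.transpose_apply]
      refine Finset.sum_congr rfl fun x _ => ?_
      have hin : (∑ k, U i k * Matrix.diagonal s k x) = U i x * s x := by
        simp [Matrix.diagonal_apply, mul_ite]
      rw [hin]
      ring
    calc ∑ i : Fin n, ((W * Gᵀ) i j) ^ 2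
        = ((n : ℝ) * p) * ∑ i, (∑ k, U i k * (s k * V j k)) ^ 2 := by
          rw [Finset.mul_sum]
          refine Finset.sum_congr rfl fun i _ => ?_
          rw [h1 i, mul_pow, Real.sq_sqrt (by positivity)]
      _ = ((n : ℝ) * p) * ∑ k, (s k) ^ 2 * (V j k) ^ 2 := by
          congr 1
          have expand : ∀ i : Fin n, (∑ k, U i k * (s k * V j k)) ^ 2
              = ∑ k, ∑ l, (U i k * U i l) * ((s k * V j k) * (s l * V j l)) := by
            intro i
            rw [sq, Finset.sum_mul_sum]
            refine Finset.sum_congr rfl fun k _ => Finset.sum_congr rfl fun l _ => ?_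
            ring
          simp_rw [expand]
          rw [Finset.sum_comm]
          refine Finset.sum_congr rfl fun k _ => ?_
          rw [Finset.sum_comm]
          have : ∀ l : Fin r, (∑ i : Fin n, (U i k * U i l) * ((s k * V j k) * (s l * V j l)))
              = (if k = l then (1:ℝ) else 0) * ((s k * V j k) * (s l * V j l)) := by
            intro l
            rw [← Finset.sum_mul, hUU k l]
          simp_rw [this, ite_mul, one_mul, zero_mul]
          rw [Finset.sum_ite_eq Finset.univ k
            (fun l => ((s k * V j k) * (s l * V j l)))]
          simp only [Finset.mem_univ, if_true]
          ring
  -- entrywise bound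
  have hentry : ∀ i : Fin n, ((W * Gᵀ) i j) ^ 2 ≤ C ^ 4 := by
    intro i
    have hmul : (W * Gᵀ) i j = ∑ k, W i k * G j k := by
      simp [Matrix.mul_apply, Matrix.transpose_apply]
    have hcs := Finset.sum_mul_sq_le_sq_mul_sq Finset.univ (W i) (G j)
    have hW2 : ∑ k, (W i k) ^ 2 ≤ C ^ 2 := by
      have h := hW i
      unfold euclNorm at h
      have hnn : (0:ℝ) ≤ ∑ k, (W i k) ^ 2 := Finset.sum_nonneg fun k _ => sq_nonneg _
      nlinarith [Real.sq_sqrt hnn, Real.sqrt_nonneg (∑ k, (W i k) ^ 2)]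
    have hG2 : ∑ k, (G j k) ^ 2 ≤ C ^ 2 := by
      have h := hG j
      unfold euclNorm at h
      have hnn : (0:ℝ) ≤ ∑ k, (G j k) ^ 2 := Finset.sum_nonneg fun k _ => sq_nonneg _
      nlinarith [Real.sq_sqrt hnn, Real.sqrt_nonneg (∑ k, (G j k) ^ 2)]
    rw [hmul]
    calc (∑ k, W i k * G j k) ^ 2 ≤ (∑ k, (W i k)^2) * ∑ k, (G j k)^2 := hcs
      _ ≤ C ^ 2 * C ^ 2 := by
          apply mul_le_mul hW2 hG2 (Finset.sum_nonneg fun k _ => sq_nonneg _) (by positivity)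
      _ = C ^ 4 := by ring
  -- sum bound
  have hsum : ((n : ℝ) * p) * ∑ k, (s k) ^ 2 * (V j k) ^ 2 ≤ (n : ℝ) * C ^ 4 := by
    rw [← key]
    calc ∑ i : Fin n, ((W * Gᵀ) i j) ^ 2 ≤ ∑ i : Fin n, C ^ 4 :=
          Finset.sum_le_sum fun i _ => hentry i
      _ = (n : ℝ) * C ^ 4 := by simp [Finset.sum_const, mul_comm]
  have hnpos : (0:ℝ) < n := by exact_mod_cast hn
  have hmain : (p : ℝ) * ∑ k, (s k) ^ 2 * (V j k) ^ 2 ≤ C ^ 4 := by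
    rw [mul_assoc] at hsum
    exact le_of_mul_le_mul_left (by linarith [hsum]) hnpos
  -- s k ≤ CS * s k ^ 2
  have hsle : ∀ k, s k ≤ CS * (s k) ^ 2 := by
    intro k
    have h1 : 1 ≤ s k * CS := (div_le_iff₀ hCS).mp (hSlb k)
    nlinarith [hspos k]
  have hfinal : (p : ℝ) * ∑ i, (V j i) ^ 2 * s i ≤ C ^ 4 * CS := by
    calc (p : ℝ) * ∑ i, (V j i) ^ 2 * s i
        ≤ (p : ℝ) * ∑ i, (V j i) ^ 2 * (CS * (s i) ^ 2) := by
          apply mul_le_mul_of_nonneg_left _ (Nat.cast_nonneg p)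
          exact Finset.sum_le_sum fun i _ =>
            mul_le_mul_of_nonneg_left (hsle i) (sq_nonneg _)
      _ = CS * ((p : ℝ) * ∑ i, (s i) ^ 2 * (V j i) ^ 2) := by
          rw [Finset.mul_sum, Finset.mul_sum, Finset.mul_sum]
          ring_nf
          refine Finset.sum_congr rfl fun i _ => by ring
      _ ≤ CS * C ^ 4 := mul_le_mul_of_nonneg_left hmain hCS.le
      _ = C ^ 4 * CS := mul_comm _ _
  calc Real.sqrt ((p : ℝ) * ∑ i, (V j i) ^ 2 * s i)
      ≤ Real.sqrt (C ^ 4 * CS) := Real.sqrt_le_sqrt hfinal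
    _ = C ^ 2 * Real.sqrt CS := by
        rw [Real.sqrt_mul (by positivity)]
        congr 1
        rw [show C ^ 4 = (C^2)^2 by ring, Real.sqrt_sq (by positivity)]
end
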